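/- arXiv:1907.06688 — 4 statements merged into one kernel-verified Lean document; each statement's English description precedes it below -/
import Mathlib

section
/- Let (T, f) be a depth-decomposition of a vector matroid M = (X, I), and let S be a primary branch of T that is not at capacity, whose root u is not the root of T. Let T' be the rooted tree obtained from T by changing the root of S to the parent of u (i.e., detaching the subtree of S below u and reattaching it at the parent of u). Then (T', f) is again a depth-decomposition of M. -/
/-! Infrastructure: rooted trees, depth-decompositions and branch-depth of matroids,
following the definitions of Kardoš, Král', Liebenau, Mach and of the paper
"Optimal matrix tree-depth and a row-invariant parameterized algorithm for
integer programming". -/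

/-- A rooted tree on a (nonempty) finite vertex type `V`, given by its root and its
parent function: the parent of the root is the root itself, and from any vertex the
root is reached by iterating the parent function. -/
structure RTree (V : Type) [Fintype V] [DecidableEq V] where
  root : V
  parent : V → V
  parent_root : parent root = root
  reach : ∀ v : V, ∃ n : ℕ, parent^[n] v = root

namespace RTree

variable {V : Type} [Fintype V] [DecidableEq V]

/-- A vertex is a leaf if it has no children. -/
def IsLeaf (T : RTree V) (v : V) : Prop :=
  ∀ u : V, T.parent u = v → u = v

/-- The non-root vertices on the path from `v` to the root of `T`; they are in bijective
correspondence with the edges of this path (each such vertex corresponds to the edge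
joining it to its parent). -/
def pathEdges (T : RTree V) (v : V) : Set V :=
  {u | u ≠ T.root ∧ ∃ n : ℕ, T.parent^[n] v = u}

/-- The number of edges of the tree. -/
def edgeCount (T : RTree V) : ℕ := Fintype.card V - 1

/-- The depth of a vertex: the number of edges on the path from the root to it. -/
noncomputable def depthV (T : RTree V) (v : V) : ℕ :=
  sInf {n : ℕ | T.parent^[n] v = T.root}

/-- The depth of the tree: the maximum number of edges on a path from the root to a leaf. -/
noncomputable def depth (T : RTree V) : ℕ :=
  Finset.univ.sup T.depthV

/-- The descendants of a vertex `u` (including `u` itself). -/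
def desc (T : RTree V) (u : V) : Set V := {w | ∃ n : ℕ, T.parent^[n] w = u}

/-- The number of children of a vertex. -/
noncomputable def childCount (T : RTree V) (u : V) : ℕ :=
  {w : V | T.parent w = u ∧ w ≠ u}.ncard

/-- A rooted tree is a rooted path if every vertex has at most one child. -/
def IsRootedPath (T : RTree V) : Prop := ∀ u : V, T.childCount u ≤ 1

/-- `a` is a strict ancestor of `v`. -/
def IsStrictAncestor (T : RTree V) (a v : V) : Prop :=
  a ≠ v ∧ ∃ n : ℕ, T.parent^[n] v = a

/-- A branch of `T` consists of a vertex `u`, exactly one child `u'` of `u` and all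
descendants of `u'`; it is hence determined by the non-root vertex `u'` and denoted
here by `u'`.  Its root is `parent u'`, its vertex set is `{parent u'} ∪ desc u'`, and
its edge number `‖S‖` is `(desc u').ncard`.  The branch determined by `u'` is primary
if its root has at least two children and every (strict) ancestor of its root has
exactly one child. -/
def IsPrimaryBranch (T : RTree V) (u' : V) : Prop :=
  u' ≠ T.root ∧ 2 ≤ T.childCount (T.parent u') ∧
    ∀ a : V, T.IsStrictAncestor a (T.parent u') → T.childCount a = 1

end RTree

/-- `(T, f)` is a depth-decomposition of the matroid on ground set `X` with rank
function `rk` and rank `r`: `f` maps elements of the matroid to leaves of `T`, the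
number of edges of `T` equals the rank `r` of the matroid, and the rank of every
`X' ⊆ X` is at most the number of edges contained in the union of the paths in `T`
from the root to the vertices `f x`, `x ∈ X'`. -/
def IsDepthDecompOn {X V : Type} [Fintype V] [DecidableEq V]
    (rk : Set X → ℕ) (r : ℕ) (T : RTree V) (f : X → V) : Prop :=
  (∀ x : X, T.IsLeaf (f x)) ∧ T.edgeCount = r ∧
    ∀ X' : Set X, rk X' ≤ (⋃ x ∈ X', T.pathEdges (f x)).ncard

/-- The branch-depth of the matroid on ground set `X` with rank function `rk` and
rank `r`: the smallest depth of a rooted tree forming a depth-decomposition. -/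
noncomputable def branchDepth {X : Type} (rk : Set X → ℕ) (r : ℕ) : ℕ :=
  sInf {d : ℕ | ∃ (nV : ℕ) (T : RTree (Fin (nV + 1))) (f : X → Fin (nV + 1)),
    IsDepthDecompOn rk r T f ∧ T.depth = d}

/-- The branch of `T` determined by the non-root vertex `u'` is at capacity: the rank
of the set `Ŝ` of matroid elements mapped by `f` to the leaves of the branch equals the
number `‖S‖` of edges of the branch plus the number of edges on the path from the root
of `T` to the root of the branch. -/
def AtCapacity {X V : Type} [Fintype V] [DecidableEq V]
    (rk : Set X → ℕ) (T : RTree V) (f : X → V) (u' : V) : Prop :=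
  rk {x | f x ∈ T.desc u'} = (T.desc u').ncard + T.depthV (T.parent u')

/-- The rank function of the vector matroid formed by the family of vectors `v`:
the rank of a subset is the dimension of its linear hull. -/
noncomputable def vecRk (F : Type) {W ι : Type} [Field F] [AddCommGroup W] [Module F W]
    (v : ι → W) (S : Set ι) : ℕ :=
  Module.finrank F (Submodule.span F (v '' S))

/-- `(T, f, g)` is an extended depth-decomposition of the vector matroid formed by the
family of vectors `v`: `(T, f)` is a depth-decomposition, the images under `g` of the
non-root vertices of `T` form a basis of the linear hull of the vectors, and every
vector `v x` lies in the linear hull of the `g`-image of the non-root vertices on the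
path from `f x` to the root. -/
def IsExtDepthDecomp (F : Type) {W ι V : Type} [Field F] [AddCommGroup W] [Module F W]
    [Fintype V] [DecidableEq V] (v : ι → W) (T : RTree V) (f : ι → V) (g : V → W) : Prop :=
  IsDepthDecompOn (vecRk F v) (vecRk F v Set.univ) T f ∧
  LinearIndependent F (fun u : {u : V // u ≠ T.root} => g u.val) ∧
  Submodule.span F (g '' {u : V | u ≠ T.root}) = Submodule.span F (Set.range v) ∧
  ∀ x : ι, v x ∈ Submodule.span F (g '' T.pathEdges (f x))

/-! ### Auxiliary lemmas -/

namespace RTree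

variable {V : Type} [Fintype V] [DecidableEq V] (T : RTree V)

lemma iter_root (n : ℕ) : T.parent^[n] T.root = T.root := by
  induction n with
  | zero => rfl
  | succ n ih => rw [Function.iterate_succ_apply', ih, T.parent_root]

lemma eq_root_of_parent_eq {w : V} (h : T.parent w = w) : w = T.root := by
  obtain ⟨n, hn⟩ := T.reach w
  have : T.parent^[n] w = w := Function.iterate_fixed h n
  rw [this] at hn; exact hn

lemma depthV_iter_eq_root (v : V) : T.parent^[T.depthV v] v = T.root :=
  Nat.sInf_mem (T.reach v)

lemma eq_root_of_depthV_eq_zero {v : V} (h : T.depthV v = 0) : v = T.root := by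
  have := T.depthV_iter_eq_root v
  rwa [h] at this

lemma iter_eq_root_of_le {v : V} {n : ℕ} (h : T.depthV v ≤ n) :
    T.parent^[n] v = T.root := by
  have : n = (n - T.depthV v) + T.depthV v := by omega
  rw [this, Function.iterate_add_apply, T.depthV_iter_eq_root, T.iter_root]

lemma lt_depthV {v w : V} {n : ℕ} (h : T.parent^[n] v = w) (hw : w ≠ T.root) :
    n < T.depthV v := by
  by_contra hn
  exact hw (h ▸ T.iter_eq_root_of_le (by omega))

lemma depthV_iter_add {v : V} {n : ℕ} (h : n ≤ T.depthV v) :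
    T.depthV (T.parent^[n] v) + n = T.depthV v := by
  have h1 : T.depthV (T.parent^[n] v) ≤ T.depthV v - n := by
    apply Nat.sInf_le
    show T.parent^[T.depthV v - n] (T.parent^[n] v) = T.root
    rw [← Function.iterate_add_apply]
    have : T.depthV v - n + n = T.depthV v := by omega
    rw [this]; exact T.depthV_iter_eq_root v
  have h2 : T.depthV v ≤ T.depthV (T.parent^[n] v) + n := by
    apply Nat.sInf_le
    show T.parent^[T.depthV (T.parent^[n] v) + n] v = T.root
    rw [Function.iterate_add_apply]
    exact T.depthV_iter_eq_root _
  omega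

lemma iter_inj {v w : V} {m n : ℕ} (hm : T.parent^[m] v = w)
    (hn : T.parent^[n] v = w) (hw : w ≠ T.root) : m = n := by
  have h1 := T.lt_depthV hm hw
  have h2 := T.lt_depthV hn hw
  have h3 := T.depthV_iter_add (v := v) (n := m) (by omega)
  have h4 := T.depthV_iter_add (v := v) (n := n) (by omega)
  rw [hm] at h3; rw [hn] at h4; omega

lemma ncard_pathEdges (v : V) : (T.pathEdges v).ncard = T.depthV v := by
  have himg : T.pathEdges v = (fun k => T.parent^[k] v) '' Set.Iio (T.depthV v) := by
    ext w
    constructor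
    · rintro ⟨hne, n, hn⟩
      exact ⟨n, T.lt_depthV hn hne, hn⟩
    · rintro ⟨k, hk, rfl⟩
      refine ⟨?_, k, rfl⟩
      intro hroot
      replace hroot : T.parent^[k] v = T.root := hroot
      have hk' : k < T.depthV v := hk
      have := T.depthV_iter_add (v := v) (n := k) (le_of_lt hk)
      rw [hroot] at this
      have h0 : T.depthV T.root = 0 := by
        apply Nat.le_antisymm _ (Nat.zero_le _)
        exact Nat.sInf_le (Function.iterate_zero_apply _ _)
      omega
  rw [himg, Set.ncard_image_of_injOn, ← Finset.coe_range, Set.ncard_coe_finset,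
    Finset.card_range]
  intro a ha b hb hab
  simp only [Set.mem_Iio] at ha hb
  have hne : T.parent^[b] v ≠ T.root := by
    intro hroot
    have := T.depthV_iter_add (v := v) (n := b) (le_of_lt hb)
    have h0 : T.depthV T.root = 0 := by
      apply Nat.le_antisymm _ (Nat.zero_le _)
      exact Nat.sInf_le (Function.iterate_zero_apply _ _)
    rw [hroot] at this; omega
  exact T.iter_inj hab rfl hne

lemma root_not_mem_desc {u' : V} (h : u' ≠ T.root) : T.root ∉ T.desc u' := by
  rintro ⟨n, hn⟩
  rw [T.iter_root] at hn
  exact h hn.symm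

/-- ancestors of a descendant-member: if `w ∈ desc u'` then any iterate-preimage fact -/
lemma mem_desc_of_iter {u' w y : V} {n : ℕ} (hy : T.parent^[n] w = y)
    (hdesc : y ∈ T.desc u') : w ∈ T.desc u' := by
  obtain ⟨m, hm⟩ := hdesc
  exact ⟨m + n, by rw [Function.iterate_add_apply, hy, hm]⟩

lemma parent_not_mem_desc {u' : V} (h : u' ≠ T.root) :
    T.parent u' ∉ T.desc u' := by
  rintro ⟨n, hn⟩
  -- then parent^[n+1] u' = u'
  have hcyc : T.parent^[n + 1] u' = u' := by
    rw [Function.iterate_add_apply]; exact hn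
  have := T.iter_inj hcyc (Function.iterate_zero_apply _ _) h
  omega

end RTree

section Aux

variable {F W ι : Type} [Field F] [AddCommGroup W] [Module F W] [Fintype ι]

lemma vecRk_empty (v : ι → W) : vecRk F v ∅ = 0 := by
  rw [vecRk, Set.image_empty, Submodule.span_empty]
  exact finrank_bot F W

lemma vecRk_submod (v : ι → W) (A B : Set ι) :
    vecRk F v (A ∪ B) + vecRk F v (A ∩ B) ≤ vecRk F v A + vecRk F v B := by
  classical
  haveI : Module.Finite F (Submodule.span F (v '' A)) :=
    Module.Finite.span_of_finite F (Set.toFinite _)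
  haveI : Module.Finite F (Submodule.span F (v '' B)) :=
    Module.Finite.span_of_finite F (Set.toFinite _)
  have hsup : Submodule.span F (v '' (A ∪ B)) =
      Submodule.span F (v '' A) ⊔ Submodule.span F (v '' B) := by
    rw [Set.image_union, Submodule.span_union]
  have hinf : Submodule.span F (v '' (A ∩ B)) ≤
      Submodule.span F (v '' A) ⊓ Submodule.span F (v '' B) :=
    le_inf (Submodule.span_mono (Set.image_mono Set.inter_subset_left))
      (Submodule.span_mono (Set.image_mono Set.inter_subset_right))
  unfold vecRk
  rw [hsup]
  have h1 : Module.finrank F (Submodule.span F (v '' (A ∩ B))) ≤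
      Module.finrank F ((Submodule.span F (v '' A)) ⊓ (Submodule.span F (v '' B)) : Submodule F W) :=
    Submodule.finrank_mono hinf
  have h2 := Submodule.finrank_sup_add_finrank_inf_eq (Submodule.span F (v '' A))
    (Submodule.span F (v '' B))
  omega

end Aux

/-- re-attaching a primary branch that is not at capacity. Let
`(T, f)` be a depth-decomposition of a vector matroid and let `S` be a primary branch of
`T` (determined by the non-root vertex `u'`, with root `u = parent u'`) that is not at
capacity and whose root `u` is not the root of `T`.  Let `T'` be the rooted tree
obtained from `T` by changing the root of `S` to the parent of `u`, i.e. by re-attaching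
`u'` (together with its subtree) at the parent of `u`.  Then `(T', f)` is again a
depth-decomposition of the matroid. -/
theorem reattached_isDepthDecomp (F W ι : Type) [Field F] [AddCommGroup W]
    [Module F W] [Fintype ι] (v : ι → W) {V : Type} [Fintype V] [DecidableEq V]
    (T : RTree V) (f : ι → V)
    (hdd : IsDepthDecompOn (vecRk F v) (vecRk F v Set.univ) T f)
    (u' : V) (hprim : T.IsPrimaryBranch u')
    (hncap : ¬ AtCapacity (vecRk F v) T f u')
    (hroot : T.parent u' ≠ T.root)
    (T' : RTree V) (hroot' : T'.root = T.root)
    (hpar' : ∀ x : V,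
      T'.parent x = if x = u' then T.parent (T.parent u') else T.parent x) :
    IsDepthDecompOn (vecRk F v) (vecRk F v Set.univ) T' f := by
  classical
  obtain ⟨hleaf, hedge, hrk⟩ := hdd
  have hu'root : u' ≠ T.root := hprim.1
  have hncap' : ¬ (vecRk F v {x | f x ∈ T.desc u'} =
      (T.desc u').ncard + T.depthV (T.parent u')) := hncap
  set u : V := T.parent u' with hu_def
  have hu_notin : u ∉ T.desc u' := T.parent_not_mem_desc hu'root
  have hroot_notin : T.root ∉ T.desc u' := T.root_not_mem_desc hu'root
  -- chains outside the branch are unchanged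
  have chain_nd : ∀ w : V, w ∉ T.desc u' → ∀ n, T'.parent^[n] w = T.parent^[n] w := by
    intro w hw n
    induction n with
    | zero => rfl
    | succ n ih =>
      rw [Function.iterate_succ_apply', Function.iterate_succ_apply', ih,
        hpar' (T.parent^[n] w), if_neg (fun h => hw ⟨n, h⟩)]
  have path_nd : ∀ w : V, w ∉ T.desc u' → T'.pathEdges w = T.pathEdges w := by
    intro w hw
    unfold RTree.pathEdges
    ext y
    simp only [Set.mem_setOf_eq, hroot']
    constructor
    · rintro ⟨h1, n, h2⟩; exact ⟨h1, n, by rw [← chain_nd w hw n]; exact h2⟩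
    · rintro ⟨h1, n, h2⟩; exact ⟨h1, n, by rw [chain_nd w hw n]; exact h2⟩
  -- chains inside the branch skip the vertex u
  have path_d : ∀ w : V, w ∈ T.desc u' → T'.pathEdges w = T.pathEdges w \ {u} := by
    intro w hw
    obtain ⟨k, hk⟩ := hw
    have S1 : ∀ n, n ≤ k → T'.parent^[n] w = T.parent^[n] w := by
      intro n hn
      induction n with
      | zero => rfl
      | succ m ih =>
        have hne : T.parent^[m] w ≠ u' := by
          intro h
          have := T.iter_inj h hk hu'root
          omega
        rw [Function.iterate_succ_apply', Function.iterate_succ_apply',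
          ih (by omega), hpar' (T.parent^[m] w), if_neg hne]
    have hku : T.parent^[k + 1] w = u := by
      rw [Function.iterate_succ_apply', hk, hu_def]
    have S2 : ∀ m, T'.parent^[k + 1 + m] w = T.parent^[k + 2 + m] w := by
      intro m
      induction m with
      | zero =>
        have e1 : T'.parent^[k + 1] w = T'.parent (T'.parent^[k] w) :=
          Function.iterate_succ_apply' _ _ _
        have e2 : T.parent^[k + 2] w = T.parent (T.parent^[k + 1] w) :=
          Function.iterate_succ_apply' _ _ _
        simp only [Nat.add_zero]
        rw [e1, S1 k le_rfl, hk, e2, hku, hpar' u', if_pos rfl]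
      | succ m ih =>
        have hne : T.parent^[k + 2 + m] w ≠ u' := by
          intro h
          have := T.iter_inj h hk hu'root
          omega
        have e1 : T'.parent^[k + 1 + (m + 1)] w = T'.parent (T'.parent^[k + 1 + m] w) := by
          rw [show k + 1 + (m + 1) = (k + 1 + m) + 1 by omega]
          exact Function.iterate_succ_apply' _ _ _
        have e2 : T.parent^[k + 2 + (m + 1)] w = T.parent (T.parent^[k + 2 + m] w) := by
          rw [show k + 2 + (m + 1) = (k + 2 + m) + 1 by omega]
          exact Function.iterate_succ_apply' _ _ _
        rw [e1, ih, e2, hpar' _, if_neg hne]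
    unfold RTree.pathEdges
    ext y
    simp only [Set.mem_setOf_eq, Set.mem_diff, Set.mem_singleton_iff, hroot']
    constructor
    · rintro ⟨h1, n, h2⟩
      by_cases hn : n ≤ k
      · have h2' : T.parent^[n] w = y := by rw [← S1 n hn]; exact h2
        refine ⟨⟨h1, n, h2'⟩, fun hyu => ?_⟩
        rw [hyu] at h2'
        have := T.iter_inj h2' hku hroot
        omega
      · have h2' : T.parent^[k + 2 + (n - k - 1)] w = y := by
          rw [← S2 (n - k - 1), show k + 1 + (n - k - 1) = n by omega]
          exact h2
        refine ⟨⟨h1, _, h2'⟩, fun hyu => ?_⟩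
        rw [hyu] at h2'
        have := T.iter_inj h2' hku hroot
        omega
    · rintro ⟨⟨h1, n, h2⟩, hyu⟩
      refine ⟨h1, ?_⟩
      rcases Nat.lt_or_ge n (k + 1) with hn | hn
      · exact ⟨n, by rw [S1 n (by omega)]; exact h2⟩
      · have hne : n ≠ k + 1 := by
          intro h
          rw [h, hku] at h2
          exact hyu h2.symm
        refine ⟨k + 1 + (n - k - 2), ?_⟩
        rw [S2 (n - k - 2), show k + 2 + (n - k - 2) = n by omega]
        exact h2
  -- every leaf of T is a descendant of u
  have hdesc_u : ∀ w : V, T.IsLeaf w → w ∈ T.desc u := by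
    have dich : ∀ m (w : V), T.depthV w ≤ m →
        (w ∈ T.desc u ∨ T.IsStrictAncestor w u) := by
      intro m
      induction m with
      | zero =>
        intro w hw
        have hwr : w = T.root := T.eq_root_of_depthV_eq_zero (by omega)
        subst hwr
        exact Or.inr ⟨Ne.symm hroot, T.reach u⟩
      | succ m ih =>
        intro w hw
        by_cases hwr : w = T.root
        · subst hwr
          exact Or.inr ⟨Ne.symm hroot, T.reach u⟩
        by_cases hwu : w = u
        · exact Or.inl ⟨0, hwu⟩
        have hdp : T.depthV (T.parent w) + 1 = T.depthV w := by
          have h1 : 1 ≤ T.depthV w := by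
            rcases Nat.eq_zero_or_pos (T.depthV w) with h | h
            · exact absurd (T.eq_root_of_depthV_eq_zero h) hwr
            · omega
          have := T.depthV_iter_add (v := w) (n := 1) h1
          simpa using this
        rcases ih (T.parent w) (by omega) with hp | hp
        · left
          obtain ⟨n, hn⟩ := hp
          refine ⟨n + 1, ?_⟩
          rw [Function.iterate_add_apply]
          simpa using hn
        · have hcc : T.childCount (T.parent w) = 1 := hprim.2.2 _ hp
          obtain ⟨hpne, np, hnp⟩ := hp
          have hex : ∃ j, T.parent^[j] u = T.parent w := ⟨np, hnp⟩
          have hjspec : T.parent^[Nat.find hex] u = T.parent w := Nat.find_spec hex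
          have hj0 : Nat.find hex ≠ 0 := by
            intro h
            rw [h] at hjspec
            exact hpne hjspec.symm
          have h1 : T.parent^[(Nat.find hex - 1) + 1] u = T.parent w := by
            rw [show (Nat.find hex - 1) + 1 = Nat.find hex by omega]
            exact hjspec
          have hcp : T.parent (T.parent^[Nat.find hex - 1] u) = T.parent w :=
            (Function.iterate_succ_apply' T.parent (Nat.find hex - 1) u).symm.trans h1
          have hcne : T.parent^[Nat.find hex - 1] u ≠ T.parent w :=
            Nat.find_min hex (show Nat.find hex - 1 < Nat.find hex by omega)
          have hw_mem : w ∈ {c' : V | T.parent c' = T.parent w ∧ c' ≠ T.parent w} :=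
            ⟨rfl, fun h => hwr (T.eq_root_of_parent_eq h.symm)⟩
          have hc_mem : T.parent^[Nat.find hex - 1] u ∈
              {c' : V | T.parent c' = T.parent w ∧ c' ≠ T.parent w} := ⟨hcp, hcne⟩
          obtain ⟨a, ha⟩ := Set.ncard_eq_one.mp hcc
          rw [ha, Set.mem_singleton_iff] at hw_mem hc_mem
          have hwc : T.parent^[Nat.find hex - 1] u = w := hc_mem.trans hw_mem.symm
          right
          refine ⟨hwu, Nat.find hex - 1, hwc⟩
    intro w hlw
    rcases dich (T.depthV w) w le_rfl with h | h
    · exact h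
    · exfalso
      obtain ⟨hne, n, hn⟩ := h
      have hex : ∃ j, T.parent^[j] u = w := ⟨n, hn⟩
      have hjspec : T.parent^[Nat.find hex] u = w := Nat.find_spec hex
      have hj0 : Nat.find hex ≠ 0 := by
        intro h0
        rw [h0] at hjspec
        exact hne hjspec.symm
      have h1 : T.parent^[(Nat.find hex - 1) + 1] u = w := by
        rw [show (Nat.find hex - 1) + 1 = Nat.find hex by omega]
        exact hjspec
      have hcp : T.parent (T.parent^[Nat.find hex - 1] u) = w :=
        (Function.iterate_succ_apply' T.parent (Nat.find hex - 1) u).symm.trans h1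
      have := hlw _ hcp
      exact Nat.find_min hex (show Nat.find hex - 1 < Nat.find hex by omega) this
  refine ⟨?_, ?_, ?_⟩
  · -- leaves are preserved
    intro x c hc
    rw [hpar' c] at hc
    by_cases hcu : c = u'
    · rw [if_pos hcu] at hc
      exfalso
      have h1 : u = f x := hleaf x _ hc
      have h2 : u' = f x := hleaf x _ (by rw [← hu_def]; exact h1)
      apply hu'root
      apply h2.trans
      apply T.eq_root_of_parent_eq
      rw [← h2, ← hu_def, h1, h2]
    · rw [if_neg hcu] at hc
      exact hleaf x c hc
  · exact hedge
  · intro X'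
    by_cases hall : ∀ x ∈ X', f x ∈ T.desc u'
    · -- the whole set maps into the branch
      rcases Set.eq_empty_or_nonempty X' with hXe | ⟨x0, hx0⟩
      · subst hXe
        rw [vecRk_empty]
        exact Nat.zero_le _
      set U := ⋃ x ∈ X', T.pathEdges (f x) with hU
      have hU'eq : (⋃ x ∈ X', T'.pathEdges (f x)) = U \ {u} := by
        ext y
        simp only [hU, Set.mem_iUnion, Set.mem_diff, Set.mem_singleton_iff, exists_prop]
        constructor
        · rintro ⟨x, hx, hy⟩
          rw [path_d _ (hall x hx)] at hy
          exact ⟨⟨x, hx, hy.1⟩, hy.2⟩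
        · rintro ⟨⟨x, hx, hy⟩, hyu⟩
          exact ⟨x, hx, by rw [path_d _ (hall x hx)]; exact ⟨hy, hyu⟩⟩
      rw [hU'eq]
      obtain ⟨k0, hk0⟩ := hall x0 hx0
      have hk0u : T.parent^[k0 + 1] (f x0) = u := by
        rw [Function.iterate_succ_apply', hk0, hu_def]
      have hux0 : u ∈ T.pathEdges (f x0) := ⟨hroot, k0 + 1, hk0u⟩
      have huU : u ∈ U := by
        rw [hU]
        exact Set.mem_biUnion hx0 hux0
      rw [Set.ncard_diff_singleton_of_mem huU]
      -- the chain of inequalities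
      set Sd := T.desc u' with hSd
      set Shat := {x : ι | f x ∈ Sd} with hShat
      set Z := {x : ι | f x ∉ Sd} with hZ
      have hcup : (X' ∪ Z) ∪ Shat = Set.univ := by
        ext x
        simp only [Set.mem_union, Set.mem_univ, iff_true, hShat, hZ, Set.mem_setOf_eq]
        tauto
      have hcap : (X' ∪ Z) ∩ Shat = X' := by
        ext x
        simp only [Set.mem_inter_iff, Set.mem_union, hShat, hZ, Set.mem_setOf_eq]
        constructor
        · rintro ⟨hx | hx, hs⟩
          · exact hx
          · exact absurd hs hx
        · intro hx
          exact ⟨Or.inl hx, hall x hx⟩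
      have hi := vecRk_submod (F := F) v (X' ∪ Z) Shat
      rw [hcup, hcap] at hi
      set Wu := ⋃ x ∈ X' ∪ Z, T.pathEdges (f x) with hWu
      have hii : vecRk F v (X' ∪ Z) ≤ Wu.ncard := hrk (X' ∪ Z)
      have hiii1 : vecRk F v Shat ≤ Sd.ncard + T.depthV u := by
        refine (hrk Shat).trans ?_
        have hsub : (⋃ x ∈ Shat, T.pathEdges (f x)) ⊆ Sd ∪ T.pathEdges u := by
          intro y hy
          simp only [Set.mem_iUnion, exists_prop] at hy
          obtain ⟨x, hx, hyne, n, hn⟩ := hy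
          obtain ⟨k, hk⟩ := hx
          by_cases hnk : n ≤ k
          · left
            refine ⟨k - n, ?_⟩
            rw [← hn, ← Function.iterate_add_apply, show k - n + n = k by omega]
            exact hk
          · right
            refine ⟨hyne, n - k - 1, ?_⟩
            have hku' : T.parent^[k + 1] (f x) = u :=
              (Function.iterate_succ_apply' T.parent k (f x)).trans
                (by rw [hk])
            calc T.parent^[n - k - 1] u
                = T.parent^[n - k - 1] (T.parent^[k + 1] (f x)) := by rw [hku']
              _ = T.parent^[(n - k - 1) + (k + 1)] (f x) :=
                  (Function.iterate_add_apply _ _ _ _).symm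
              _ = T.parent^[n] (f x) := by
                  rw [show (n - k - 1) + (k + 1) = n by omega]
              _ = y := hn
        refine (Set.ncard_le_ncard hsub (Set.toFinite _)).trans ?_
        refine (Set.ncard_union_le _ _).trans ?_
        rw [T.ncard_pathEdges u]
      have hiii : vecRk F v Shat + 1 ≤ Sd.ncard + T.depthV u := by
        rcases Nat.lt_or_ge (vecRk F v Shat) (Sd.ncard + T.depthV u) with h | h
        · omega
        · exact absurd (Nat.le_antisymm hiii1 h) hncap'
      have hdisj1 : Disjoint Wu (Sd \ U) := by
        rw [Set.disjoint_left]
        intro y hyW hySd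
        simp only [hWu, Set.mem_iUnion, exists_prop] at hyW
        obtain ⟨x, hx, hyx⟩ := hyW
        rcases hx with hx | hx
        · apply hySd.2
          rw [hU]
          exact Set.mem_biUnion hx hyx
        · obtain ⟨hyne, n, hn⟩ := hyx
          obtain ⟨m, hm⟩ := hySd.1
          exact hx ⟨m + n, by rw [Function.iterate_add_apply, hn, hm]⟩
      have hWsub : Wu ∪ (Sd \ U) ⊆ {y : V | y ≠ T.root} := by
        rintro y (hy | hy)
        · simp only [hWu, Set.mem_iUnion, exists_prop] at hy
          obtain ⟨x, hx, hyne, _⟩ := hy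
          exact hyne
        · exact fun h => hroot_notin (h ▸ hy.1)
      have hEn : ({y : V | y ≠ T.root}).ncard = T.edgeCount := by
        have he : {y : V | y ≠ T.root} = Set.univ \ {T.root} := by
          ext y; simp
        rw [he, Set.ncard_diff_singleton_of_mem (Set.mem_univ _),
          Set.ncard_univ, Nat.card_eq_fintype_card]
        rfl
      have hiv1 : Wu.ncard + (Sd \ U).ncard ≤ T.edgeCount := by
        rw [← Set.ncard_union_eq hdisj1 (Set.toFinite _) (Set.toFinite _), ← hEn]
        exact Set.ncard_le_ncard hWsub (Set.toFinite _)
      have hiv2 : Sd.ncard ≤ (Sd \ U).ncard + (U ∩ Sd).ncard := by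
        refine le_trans (Set.ncard_le_ncard ?_ (Set.toFinite _)) (Set.ncard_union_le _ _)
        intro y hy
        by_cases h : y ∈ U
        · exact Or.inr ⟨h, hy⟩
        · exact Or.inl ⟨hy, h⟩
      have hPsub : T.pathEdges u ⊆ U := by
        rintro y ⟨hyne, n, hn⟩
        rw [hU]
        refine Set.mem_biUnion hx0 ⟨hyne, n + (k0 + 1), ?_⟩
        rw [Function.iterate_add_apply, hk0u]
        exact hn
      have hdisj2 : Disjoint (U ∩ Sd) (T.pathEdges u) := by
        rw [Set.disjoint_left]
        rintro y ⟨hyU, hySd⟩ ⟨hyne, n, hn⟩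
        exact hu_notin (T.mem_desc_of_iter hn hySd)
      have hv : (U ∩ Sd).ncard + T.depthV u ≤ U.ncard := by
        rw [← T.ncard_pathEdges u,
          ← Set.ncard_union_eq hdisj2 (Set.toFinite _) (Set.toFinite _)]
        exact Set.ncard_le_ncard (Set.union_subset Set.inter_subset_left hPsub)
          (Set.toFinite _)
      have hedge' : T.edgeCount = vecRk F v Set.univ := hedge
      omega
    · -- some element is mapped outside the branch
      push_neg at hall
      obtain ⟨b, hbX, hb⟩ := hall
      have hUeq : (⋃ x ∈ X', T'.pathEdges (f x)) = ⋃ x ∈ X', T.pathEdges (f x) := by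
        have hub : u ∈ T.pathEdges (f b) := by
          obtain ⟨n, hn⟩ := hdesc_u (f b) (hleaf b)
          exact ⟨hroot, n, hn⟩
        apply Set.Subset.antisymm
        · refine Set.iUnion₂_subset fun x hx => ?_
          by_cases hxd : f x ∈ T.desc u'
          · rw [path_d _ hxd]
            exact Set.diff_subset.trans (Set.subset_biUnion_of_mem (u := fun x => T.pathEdges (f x)) hx)
          · rw [path_nd _ hxd]
            exact Set.subset_biUnion_of_mem (u := fun x => T.pathEdges (f x)) hx
        · refine Set.iUnion₂_subset fun x hx => ?_
          by_cases hxd : f x ∈ T.desc u'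
          · intro y hy
            by_cases hyu : y = u
            · have hub' : u ∈ T'.pathEdges (f b) := by
                rw [path_nd _ hb]
                exact hub
              rw [hyu]
              exact Set.mem_biUnion hbX hub'
            · have hy' : y ∈ T'.pathEdges (f x) := by
                rw [path_d _ hxd]
                exact ⟨hy, hyu⟩
              exact Set.mem_biUnion hx hy'
          · intro y hy
            have hy' : y ∈ T'.pathEdges (f x) := by
              rw [path_nd _ hxd]
              exact hy
            exact Set.mem_biUnion hx hy'
      rw [hUeq]
      exact hrk X'
end

section
/- Let (T, f) be a depth-decomposition of a vector matroid M = (X, I) such that T is not a rooted path and each primary branch of T is at capacity. Let S_1, ..., S_k be the primary branches of T, let h be the depth of their common root, let K be the h-dimensional subspace such that span(Ŝ_i) ∩ span(Ŝ_j) = K for all i < j, and let b_1, ..., b_h be a basis of K. For each i, let M_i be the matroid on ground set Ŝ_i in which a subset X' ⊆ Ŝ_i is independent if and only if X' ∪ {b_1, ..., b_h} is linearly independent, and let f_i be the restriction of f to Ŝ_i. Then (S_i, f_i) is a depth-decomposition of M_i. -/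
section TreeAux

variable {V : Type} [Fintype V] [DecidableEq V]

lemma RTree.parent_iterate_root (T : RTree V) (n : ℕ) : T.parent^[n] T.root = T.root := by
  induction n with
  | zero => rfl
  | succ n ih => rw [Function.iterate_succ_apply', ih, T.parent_root]

lemma RTree.eq_root_of_cycle (T : RTree V) {v : V} {m : ℕ} (hm : 0 < m)
    (hcyc : T.parent^[m] v = v) : v = T.root := by
  obtain ⟨N, hN⟩ := T.reach v
  have key : ∀ q : ℕ, T.parent^[q * m] v = v := by
    intro q
    induction q with
    | zero => simp
    | succ q ih =>
      rw [Nat.succ_mul, Function.iterate_add_apply, hcyc, ih]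
  have h1 : T.parent^[N * m] v = T.root := by
    have hle : N ≤ N * m := Nat.le_mul_of_pos_right N hm
    have : N * m = (N * m - N) + N := by omega
    rw [this, Function.iterate_add_apply, hN, T.parent_iterate_root]
  exact (key N).symm.trans h1

lemma RTree.ne_root_of_mem_desc (T : RTree V) {u' w : V} (hu : u' ≠ T.root)
    (hw : w ∈ T.desc u') : w ≠ T.root := by
  rintro rfl
  obtain ⟨k, hk⟩ := hw
  rw [T.parent_iterate_root] at hk
  exact hu hk.symm

lemma RTree.desc_disj_aux (T : RTree V) {u₁ u₂ : V} {d : ℕ} (hd : 0 < d)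
    (hpar : T.parent u₁ = T.parent u₂) (h2p : u₂ ≠ T.parent u₂)
    (hiter : T.parent^[d] u₁ = u₂) : False := by
  have hcyc : T.parent^[d] (T.parent u₁) = T.parent u₁ := by
    rw [← Function.iterate_succ_apply, Function.iterate_succ_apply', hiter, ← hpar]
  have hroot : T.parent u₁ = T.root := T.eq_root_of_cycle hd hcyc
  have hu2 : u₂ = T.root := by
    have : d = (d - 1) + 1 := by omega
    rw [← hiter, this, Function.iterate_succ_apply, hroot, T.parent_iterate_root]
  apply h2p
  rw [hu2]
  exact T.parent_root.symm

lemma RTree.desc_disjoint (T : RTree V) {u₁ u₂ : V} (hpar : T.parent u₁ = T.parent u₂)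
    (hne : u₁ ≠ u₂) (h1p : u₁ ≠ T.parent u₁) (h2p : u₂ ≠ T.parent u₂) :
    T.desc u₁ ∩ T.desc u₂ = ∅ := by
  ext w
  simp only [Set.mem_inter_iff, Set.mem_empty_iff_false, iff_false]
  rintro ⟨⟨m, hm⟩, ⟨n, hn⟩⟩
  rcases le_or_gt m n with hmn | hmn
  · rcases eq_or_lt_of_le hmn with rfl | hlt
    · exact hne (hm.symm.trans hn)
    · refine T.desc_disj_aux (d := n - m) (by omega) hpar h2p ?_
      have : n = (n - m) + m := by omega
      rw [← hm, ← Function.iterate_add_apply, ← this, hn]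
  · refine T.desc_disj_aux (d := m - n) (by omega) hpar.symm h1p ?_
    have : m = (m - n) + n := by omega
    rw [← hn, ← Function.iterate_add_apply, ← this, hm]

lemma RTree.pathEdges_subset (T : RTree V) {u' x : V} (hu : u' ≠ T.root)
    (hx : x ∈ T.desc u') :
    T.pathEdges x ⊆ {w | w ∈ T.desc u' ∧ ∃ n : ℕ, T.parent^[n] x = w} ∪
      T.pathEdges (T.parent u') := by
  obtain ⟨m, hm⟩ := hx
  rintro w ⟨hwr, n, hn⟩
  rcases le_or_gt n m with hnm | hnm
  · left
    refine ⟨⟨m - n, ?_⟩, n, hn⟩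
    have : m = (m - n) + n := by omega
    rw [← hn, ← Function.iterate_add_apply, ← this, hm]
  · right
    refine ⟨hwr, n - m - 1, ?_⟩
    rw [← Function.iterate_succ_apply, Nat.succ_eq_add_one]
    have h1 : (n - m - 1) + 1 = n - m := by omega
    have h2 : n = (n - m) + m := by omega
    rw [h1, ← hm, ← Function.iterate_add_apply, ← h2, hn]

lemma RTree.pathEdges_ncard_le (T : RTree V) (p : V) :
    (T.pathEdges p).ncard ≤ T.depthV p := by
  classical
  have hmem : T.parent^[T.depthV p] p = T.root := Nat.sInf_mem (T.reach p)
  have hsub : T.pathEdges p ⊆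
      ↑((Finset.range (T.depthV p)).image (fun n => T.parent^[n] p)) := by
    rintro w ⟨hwr, n, hn⟩
    simp only [Finset.coe_image, Finset.coe_range, Set.mem_image, Set.mem_Iio]
    refine ⟨n, ?_, hn⟩
    by_contra hge
    apply hwr
    have : n = (n - T.depthV p) + T.depthV p := by omega
    rw [← hn, this, Function.iterate_add_apply, hmem, T.parent_iterate_root]
  calc (T.pathEdges p).ncard
      ≤ (((Finset.range (T.depthV p)).image (fun n => T.parent^[n] p) : Finset V) : Set V).ncard :=
        Set.ncard_le_ncard hsub (Finset.finite_toSet _)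
    _ = ((Finset.range (T.depthV p)).image (fun n => T.parent^[n] p)).card :=
        Set.ncard_coe_finset _
    _ ≤ T.depthV p := le_trans Finset.card_image_le (le_of_eq (Finset.card_range _))

lemma RTree.ne_parent_of_ne_root (T : RTree V) {u : V} (hu : u ≠ T.root) :
    u ≠ T.parent u := by
  intro heq
  exact hu (T.eq_root_of_cycle (m := 1) one_pos heq.symm)

end TreeAux

/-- restrictions of a depth-decomposition to primary branches. Let
`(T, f)` be a depth-decomposition of a vector matroid such that `T` is not a rooted path
and each primary branch of `T` is at capacity, let `h` be the depth of the common root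
of the primary branches, let `K` be the `h`-dimensional subspace in which the hulls of
any two distinct primary branches intersect, and let `b` be a basis of `K`.  For a
primary branch `S` (determined by the non-root vertex `u'`), let `M'` be the matroid on
the ground set `Ŝ` in which `X' ⊆ Ŝ` is independent iff `X' ∪ {b 0, …, b (h-1)}` is
linearly independent; the rank of `X' ⊆ Ŝ` in `M'` is `dim (span (X' ∪ K)) - h`.  Then
`(S, f restricted to Ŝ)` is a depth-decomposition of `M'`: the elements of `Ŝ` are
mapped to leaves of `S`, the number `‖S‖` of edges of `S` equals the rank of `M'`, and
the rank in `M'` of every `X' ⊆ Ŝ` is at most the number of edges of `S` contained in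
the union of the paths in `S` from the root of `S` to the vertices `f x`, `x ∈ X'`. -/
theorem primary_branch_isDepthDecomp (F W ι : Type) [Field F] [AddCommGroup W]
    [Module F W] [Fintype ι] (v : ι → W) {V : Type} [Fintype V] [DecidableEq V]
    (T : RTree V) (f : ι → V)
    (hdd : IsDepthDecompOn (vecRk F v) (vecRk F v Set.univ) T f)
    (hnp : ¬ T.IsRootedPath)
    (hcap : ∀ u' : V, T.IsPrimaryBranch u' → AtCapacity (vecRk F v) T f u')
    (h : ℕ) (hh : ∀ u' : V, T.IsPrimaryBranch u' → T.depthV (T.parent u') = h)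
    (K : Submodule F W) (hK : Module.finrank F K = h)
    (hKint : ∀ u₁ u₂ : V, T.IsPrimaryBranch u₁ → T.IsPrimaryBranch u₂ → u₁ ≠ u₂ →
      Submodule.span F (v '' {x | f x ∈ T.desc u₁}) ⊓
        Submodule.span F (v '' {x | f x ∈ T.desc u₂}) = K)
    (b : Fin h → W) (hb : LinearIndependent F b ∧ Submodule.span F (Set.range b) = K) :
    ∀ u' : V, T.IsPrimaryBranch u' →
      (∀ x : ι, f x ∈ T.desc u' → T.IsLeaf (f x)) ∧
      (T.desc u').ncard =
        Module.finrank F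
          ↥(Submodule.span F (v '' {x | f x ∈ T.desc u'}) ⊔ K) - h ∧
      ∀ X' : Set ι, X' ⊆ {x | f x ∈ T.desc u'} →
        Module.finrank F ↥(Submodule.span F (v '' X') ⊔ K) - h ≤
          (⋃ x ∈ X', {w : V | w ∈ T.desc u' ∧ ∃ n : ℕ, T.parent^[n] (f x) = w}).ncard := by
  classical
  intro u' hprim
  obtain ⟨hur, hcc, hanc⟩ := hprim
  have hprim' : T.IsPrimaryBranch u' := ⟨hur, hcc, hanc⟩
  -- find a second child u₂ of T.parent u'
  have h2 : 1 < {w : V | T.parent w = T.parent u' ∧ w ≠ T.parent u'}.ncard := hcc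
  obtain ⟨u₂, ⟨hpu₂, hu₂p⟩, hu₂ne⟩ := Set.exists_ne_of_one_lt_ncard h2 u'
  have hu₂r : u₂ ≠ T.root := by
    rintro rfl
    exact hu₂p (T.parent_root.symm.trans hpu₂)
  have hprim₂ : T.IsPrimaryBranch u₂ := by
    refine ⟨hu₂r, by rw [hpu₂]; exact hcc, fun a ha => hanc a (by rwa [hpu₂] at ha)⟩
  -- notation
  set S₁ : Set ι := {x | f x ∈ T.desc u'} with hS₁
  set S₂ : Set ι := {x | f x ∈ T.desc u₂} with hS₂
  have hKeq : Submodule.span F (v '' S₁) ⊓ Submodule.span F (v '' S₂) = K :=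
    hKint u' u₂ hprim' hprim₂ hu₂ne.symm
  have hKle1 : K ≤ Submodule.span F (v '' S₁) := by rw [← hKeq]; exact inf_le_left
  have hKle2 : K ≤ Submodule.span F (v '' S₂) := by rw [← hKeq]; exact inf_le_right
  haveI : FiniteDimensional F K :=
    hb.2 ▸ FiniteDimensional.span_of_finite F (Set.finite_range b)
  haveI : FiniteDimensional F (Submodule.span F (v '' S₁)) :=
    FiniteDimensional.span_of_finite F ((Set.toFinite S₁).image v)
  haveI : FiniteDimensional F (Submodule.span F (v '' S₂)) :=
    FiniteDimensional.span_of_finite F ((Set.toFinite S₂).image v)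
  -- capacity facts
  have hdep : T.depthV (T.parent u') = h := hh u' hprim'
  have hcap1 : Module.finrank F (Submodule.span F (v '' S₁)) = (T.desc u').ncard + h := by
    have := hcap u' hprim'
    unfold AtCapacity vecRk at this
    rw [hdep] at this
    exact this
  have hcap2 : Module.finrank F (Submodule.span F (v '' S₂)) = (T.desc u₂).ncard + h := by
    have := hcap u₂ hprim₂
    unfold AtCapacity vecRk at this
    rw [hpu₂, hdep] at this
    exact this
  refine ⟨fun x _ => hdd.1 x, ?_, ?_⟩
  · -- edge count of the branch
    rw [sup_eq_left.mpr hKle1, hcap1]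
    omega
  · -- rank inequality for subsets
    intro X' hX'
    haveI : FiniteDimensional F (Submodule.span F (v '' X')) :=
      FiniteDimensional.span_of_finite F ((Set.toFinite X').image v)
    set A := Submodule.span F (v '' X') ⊔ K with hA
    set B := Submodule.span F (v '' S₂) with hB
    set E : Set V := ⋃ x ∈ X', {w : V | w ∈ T.desc u' ∧ ∃ n : ℕ, T.parent^[n] (f x) = w}
      with hE
    have hAle : A ≤ Submodule.span F (v '' S₁) :=
      sup_le (Submodule.span_mono (Set.image_mono hX')) hKle1
    have hinf : A ⊓ B = K := by
      refine le_antisymm ?_ (le_inf (le_sup_right) hKle2)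
      calc A ⊓ B ≤ Submodule.span F (v '' S₁) ⊓ B := inf_le_inf_right B hAle
        _ = K := hKeq
    have hsup : A ⊔ B = Submodule.span F (v '' (X' ∪ S₂)) := by
      rw [Set.image_union, Submodule.span_union, hA, hB, sup_assoc,
        sup_eq_right.mpr hKle2]
    have e1 : Module.finrank F ↥(A ⊔ B) + Module.finrank F ↥(A ⊓ B) =
        Module.finrank F ↥A + Module.finrank F ↥B :=
      Submodule.finrank_sup_add_finrank_inf_eq A B
    rw [hinf, hsup, hK] at e1
    have e3 : Module.finrank F ↥(Submodule.span F (v '' (X' ∪ S₂))) ≤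
        (⋃ x ∈ X' ∪ S₂, T.pathEdges (f x)).ncard := hdd.2.2 (X' ∪ S₂)
    have hsub : (⋃ x ∈ X' ∪ S₂, T.pathEdges (f x)) ⊆
        E ∪ (T.desc u₂ ∪ T.pathEdges (T.parent u')) := by
      intro w hw
      simp only [Set.mem_iUnion, exists_prop] at hw
      obtain ⟨x, hx, hwx⟩ := hw
      rcases hx with hx | hx
      · rcases T.pathEdges_subset hur (hX' hx) hwx with hw1 | hw1
        · left
          simp only [hE, Set.mem_iUnion, exists_prop]
          exact ⟨x, hx, hw1⟩
        · right; right; exact hw1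
      · rcases T.pathEdges_subset hu₂r hx hwx with hw1 | hw1
        · right; left; exact hw1.1
        · right; right; rwa [hpu₂] at hw1
    have e4 : (⋃ x ∈ X' ∪ S₂, T.pathEdges (f x)).ncard ≤
        E.ncard + ((T.desc u₂).ncard + h) := by
      calc (⋃ x ∈ X' ∪ S₂, T.pathEdges (f x)).ncard
          ≤ (E ∪ (T.desc u₂ ∪ T.pathEdges (T.parent u'))).ncard :=
            Set.ncard_le_ncard hsub (Set.toFinite _)
        _ ≤ E.ncard + (T.desc u₂ ∪ T.pathEdges (T.parent u')).ncard :=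
            Set.ncard_union_le _ _
        _ ≤ E.ncard + ((T.desc u₂).ncard + (T.pathEdges (T.parent u')).ncard) :=
            Nat.add_le_add_left (Set.ncard_union_le _ _) _
        _ ≤ E.ncard + ((T.desc u₂).ncard + h) := by
            have := T.pathEdges_ncard_le (T.parent u')
            omega
    omega
end

section
/- For any graph G, the branch-depth of the graphic matroid M(G) is at most the tree-depth of G decreased by one: bd(M(G)) ≤ td(G) − 1. -/
/-- A rooted forest on a finite vertex type `V`, given by its parent function: the roots
are the fixed points of the parent function, and iterating the parent function from any
vertex reaches a root. -/
structure RForest (V : Type) [Fintype V] [DecidableEq V] where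
  parent : V → V
  reach : ∀ v : V, ∃ n : ℕ, parent (parent^[n] v) = parent^[n] v

namespace RForest

variable {V : Type} [Fintype V] [DecidableEq V]

/-- The depth of a vertex: the number of edges on the path from the root of its tree. -/
noncomputable def depthV (Fo : RForest V) (v : V) : ℕ :=
  sInf {n : ℕ | Fo.parent (Fo.parent^[n] v) = Fo.parent^[n] v}

/-- The height of a rooted forest: the maximum number of vertices on a path from a root
to a leaf. -/
noncomputable def height (Fo : RForest V) : ℕ :=
  Finset.univ.sup fun v => Fo.depthV v + 1

/-- The closure of the rooted forest `Fo` (obtained by adding edges from each vertex to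
all its descendants) contains the graph `G` as a subgraph. -/
def ClosureContains (Fo : RForest V) (G : SimpleGraph V) : Prop :=
  ∀ u v : V, G.Adj u v → (∃ n : ℕ, Fo.parent^[n] v = u) ∨ (∃ n : ℕ, Fo.parent^[n] u = v)

end RForest

/-- The tree-depth of a graph `G`: the minimum height of a rooted forest whose closure
contains `G` as a subgraph. -/
noncomputable def treeDepth {V : Type} [Fintype V] [DecidableEq V] (G : SimpleGraph V) : ℕ :=
  sInf {h : ℕ | ∃ Fo : RForest V, Fo.ClosureContains G ∧ Fo.height = h}

/-- The rank function of the graphic matroid of a graph `G`: the ground set is the edge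
set of `G` and the rank of a set of edges is the maximum size of an acyclic subset. -/
noncomputable def graphicRk {V : Type} [Fintype V] [DecidableEq V] (G : SimpleGraph V)
    (S : Set G.edgeSet) : ℕ :=
  sSup {k : ℕ | ∃ S' ⊆ S, (SimpleGraph.fromEdgeSet (Subtype.val '' S')).IsAcyclic ∧
    S'.ncard = k}

/-- The branch-depth of the graphic matroid of a graph `G`. -/
noncomputable def graphicBranchDepth {V : Type} [Fintype V] [DecidableEq V]
    (G : SimpleGraph V) : ℕ :=
  branchDepth (graphicRk G) (graphicRk G Set.univ)


lemma iter_fixed {V : Type} {f : V → V} {v : V} (h : f v = v) (n : ℕ) : f^[n] v = v := by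
  induction n with
  | zero => rfl
  | succ n ih => rw [Function.iterate_succ_apply', ih, h]

section Forest
variable {V : Type} [Fintype V] [DecidableEq V] (Fo : RForest V)

/-- ancestor relation in a forest -/
def Anc (u v : V) : Prop := ∃ n : ℕ, Fo.parent^[n] v = u

variable {Fo}

lemma anc_refl (v : V) : Anc Fo v v := ⟨0, rfl⟩

lemma anc_trans {u v w : V} (h1 : Anc Fo u v) (h2 : Anc Fo v w) : Anc Fo u w := by
  obtain ⟨m, hm⟩ := h1; obtain ⟨n, hn⟩ := h2
  exact ⟨m + n, by rw [Function.iterate_add_apply, hn, hm]⟩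

lemma dep_nonempty (v : V) :
    {n : ℕ | Fo.parent (Fo.parent^[n] v) = Fo.parent^[n] v}.Nonempty := Fo.reach v

lemma dep_fix (v : V) :
    Fo.parent (Fo.parent^[Fo.depthV v] v) = Fo.parent^[Fo.depthV v] v :=
  Nat.sInf_mem (dep_nonempty v)

lemma iter_of_dep_le {v : V} {n : ℕ} (h : Fo.depthV v ≤ n) :
    Fo.parent^[n] v = Fo.parent^[Fo.depthV v] v := by
  obtain ⟨k, rfl⟩ := Nat.exists_eq_add_of_le h
  rw [add_comm, Function.iterate_add_apply]
  exact iter_fixed (dep_fix v) k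

lemma dep_le_iff {v : V} {n : ℕ} :
    Fo.depthV v ≤ n ↔ Fo.parent (Fo.parent^[n] v) = Fo.parent^[n] v := by
  constructor
  · intro h; rw [iter_of_dep_le h]; exact dep_fix v
  · intro h; exact Nat.sInf_le h

lemma anc_norm {u v : V} (h : Anc Fo u v) :
    ∃ m : ℕ, m ≤ Fo.depthV v ∧ Fo.parent^[m] v = u := by
  obtain ⟨n, hn⟩ := h
  rcases le_or_gt n (Fo.depthV v) with h' | h'
  · exact ⟨n, h', hn⟩
  · exact ⟨Fo.depthV v, le_refl _, by rw [← iter_of_dep_le h'.le, hn]⟩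

lemma dep_of_iter {u v : V} {m : ℕ} (hm : m ≤ Fo.depthV v) (h : Fo.parent^[m] v = u) :
    Fo.depthV u = Fo.depthV v - m := by
  have key : ∀ n : ℕ, (Fo.parent (Fo.parent^[n] u) = Fo.parent^[n] u) ↔ Fo.depthV v ≤ n + m := by
    intro n
    rw [← h, ← Function.iterate_add_apply, ← dep_le_iff]
  apply le_antisymm
  · exact Nat.sInf_le ((key _).2 (by omega))
  · have h2 : Fo.depthV v ≤ Fo.depthV u + m := (key _).1 (dep_fix u)
    omega

lemma dep_le_of_anc {u v : V} (h : Anc Fo u v) : Fo.depthV u ≤ Fo.depthV v := by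
  obtain ⟨m, hm, h⟩ := anc_norm h
  have := dep_of_iter hm h
  omega

lemma dep_lt_of_anc_ne {u v : V} (h : Anc Fo u v) (hne : u ≠ v) :
    Fo.depthV u < Fo.depthV v := by
  obtain ⟨m, hm, h⟩ := anc_norm h
  have hd := dep_of_iter hm h
  have hm0 : m ≠ 0 := by rintro rfl; exact hne h.symm
  omega

lemma anc_antisymm {u v : V} (h1 : Anc Fo u v) (h2 : Anc Fo v u) : u = v := by
  by_contra hne
  have := dep_lt_of_anc_ne h1 hne
  have := dep_lt_of_anc_ne h2 (Ne.symm hne)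
  omega

lemma anc_total {u w v : V} (h1 : Anc Fo u v) (h2 : Anc Fo w v) :
    Anc Fo u w ∨ Anc Fo w u := by
  obtain ⟨a, ha⟩ := h1; obtain ⟨b, hb⟩ := h2
  rcases le_total a b with h | h
  · obtain ⟨k, rfl⟩ := Nat.exists_eq_add_of_le h
    right; exact ⟨k, by rw [← hb, add_comm, Function.iterate_add_apply, ha]⟩
  · obtain ⟨k, rfl⟩ := Nat.exists_eq_add_of_le h
    left; exact ⟨k, by rw [← ha, add_comm, Function.iterate_add_apply, hb]⟩

lemma anc_of_dep_le {u w v : V} (h1 : Anc Fo u v) (h2 : Anc Fo w v)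
    (hd : Fo.depthV u ≤ Fo.depthV w) : Anc Fo u w := by
  rcases anc_total h1 h2 with h | h
  · exact h
  · rcases eq_or_ne w u with rfl | hne
    · exact anc_refl _
    · exact absurd (dep_lt_of_anc_ne h hne) (by omega)

lemma dep_eq_zero_anc {u v : V} (h : Fo.depthV v = 0) (ha : Anc Fo u v) : u = v := by
  obtain ⟨m, hm, hiter⟩ := anc_norm ha
  have hm0 : m = 0 := by omega
  subst hm0
  exact hiter.symm

end Forest

section Tree
variable {V : Type} [Fintype V] [DecidableEq V] (T : RTree V)

/-- ancestor relation in a rooted tree -/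
def AncT (u v : V) : Prop := ∃ n : ℕ, T.parent^[n] v = u

variable {T}

lemma ancT_refl (v : V) : AncT T v v := ⟨0, rfl⟩

lemma ancT_trans {u v w : V} (h1 : AncT T u v) (h2 : AncT T v w) : AncT T u w := by
  obtain ⟨m, hm⟩ := h1; obtain ⟨n, hn⟩ := h2
  exact ⟨m + n, by rw [Function.iterate_add_apply, hn, hm]⟩

lemma tdep_nonempty (v : V) : {n : ℕ | T.parent^[n] v = T.root}.Nonempty := T.reach v

lemma tdep_fix (v : V) : T.parent^[T.depthV v] v = T.root := Nat.sInf_mem (tdep_nonempty v)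

lemma tdep_root : T.depthV T.root = 0 :=
  Nat.le_zero.mp (Nat.sInf_le (by simp [Set.mem_setOf_eq]))

lemma tdep_pos {v : V} (h : v ≠ T.root) : 1 ≤ T.depthV v := by
  rcases Nat.eq_zero_or_pos (T.depthV v) with h0 | h1
  · have := tdep_fix (T := T) v
    rw [h0] at this
    exact absurd this h
  · exact h1

lemma tdep_parent {v : V} (h : v ≠ T.root) :
    T.depthV v = T.depthV (T.parent v) + 1 := by
  have h1 : 1 ≤ T.depthV v := tdep_pos h
  have hf : T.parent^[T.depthV v - 1] (T.parent v) = T.root := by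
    have h2 := tdep_fix (T := T) v
    rw [show T.depthV v = (T.depthV v - 1) + 1 by omega, Function.iterate_succ_apply] at h2
    exact h2
  have hle : T.depthV (T.parent v) ≤ T.depthV v - 1 := Nat.sInf_le hf
  have hge : T.depthV v ≤ T.depthV (T.parent v) + 1 := by
    apply Nat.sInf_le
    show T.parent^[T.depthV (T.parent v) + 1] v = T.root
    rw [Function.iterate_succ_apply]
    exact tdep_fix (T := T) (T.parent v)
  omega

lemma tdep_le_depth (v : V) : T.depthV v ≤ T.depth :=
  Finset.le_sup (Finset.mem_univ v)

lemma exists_leaf_below (v : V) : ∃ l : V, T.IsLeaf l ∧ AncT T v l := by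
  suffices h : ∀ k : ℕ, ∀ v : V, T.depth - T.depthV v ≤ k → ∃ l : V, T.IsLeaf l ∧ AncT T v l by
    exact h (T.depth - T.depthV v) v le_rfl
  intro k
  induction k with
  | zero =>
    intro v hv
    by_cases hl : T.IsLeaf v
    · exact ⟨v, hl, ancT_refl v⟩
    · exfalso
      simp only [RTree.IsLeaf, not_forall] at hl
      obtain ⟨u, hu, hne⟩ := hl
      have hur : u ≠ T.root := by
        rintro rfl
        exact hne (by rw [← T.parent_root, hu])
      have h2 := tdep_parent hur
      rw [hu] at h2
      have h3 := tdep_le_depth (T := T) u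
      omega
  | succ k ih =>
    intro v hv
    by_cases hl : T.IsLeaf v
    · exact ⟨v, hl, ancT_refl v⟩
    · simp only [RTree.IsLeaf, not_forall] at hl
      obtain ⟨u, hu, hne⟩ := hl
      have hur : u ≠ T.root := by
        rintro rfl
        exact hne (by rw [← T.parent_root, hu])
      have hdep := tdep_parent hur
      rw [hu] at hdep
      obtain ⟨l, hl, hanc⟩ := ih u (by have h3 := tdep_le_depth (T := T) u; omega)
      exact ⟨l, hl, ancT_trans ⟨1, by simpa using hu⟩ hanc⟩

lemma pathEdges_mono {u v : V} (h : AncT T u v) : T.pathEdges u ⊆ T.pathEdges v := by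
  rintro w ⟨hw, hanc⟩
  exact ⟨hw, ancT_trans hanc h⟩

lemma mem_pathEdges {u v : V} (h : AncT T u v) (hu : u ≠ T.root) : u ∈ T.pathEdges v := ⟨hu, h⟩

end Tree


section LemmaX
open SimpleGraph

variable {V : Type} [Fintype V] [DecidableEq V]

lemma lemmaX (n : ℕ) :
    ∀ (s : Set (Sym2 V)) (R : Set V), s.ncard = n →
      (∀ e ∈ s, ¬e.IsDiag) → (fromEdgeSet s).IsAcyclic →
      (∀ r1 ∈ R, ∀ r2 ∈ R, (fromEdgeSet s).Reachable r1 r2 → r1 = r2) →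
      s.ncard ≤ ((fromEdgeSet s).support \ R).ncard := by
  induction n using Nat.strong_induction_on with
  | _ n IH =>
  intro s R hn hdiag hac hR
  rcases Set.eq_empty_or_nonempty s with rfl | ⟨e, he⟩
  · simp
  induction e using Sym2.ind with
  | _ u v =>
  have hne : u ≠ v := fun h => hdiag _ he (Sym2.mk_isDiag_iff.mpr h)
  set s' := s \ {s(u, v)} with hs'
  have hsub : s' ⊆ s := Set.diff_subset
  have hle : fromEdgeSet s' ≤ fromEdgeSet s := fromEdgeSet_mono hsub
  have hAdj : (fromEdgeSet s).Adj u v := (fromEdgeSet_adj _).mpr ⟨he, hne⟩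
  have hac' : (fromEdgeSet s').IsAcyclic := by
    intro a c hc
    have hq : ∀ e' ∈ c.edges, e' ∈ (fromEdgeSet s).edgeSet := by
      intro e' he'
      have h1 := c.edges_subset_edgeSet he'
      rw [edgeSet_fromEdgeSet] at h1 ⊢
      exact ⟨hsub h1.1, h1.2⟩
    exact hac (c.transfer _ hq) (hc.transfer hq)
  have hnr : ¬ (fromEdgeSet s').Reachable u v := by
    intro hr
    have h2 : fromEdgeSet s' ≤ fromEdgeSet s \ fromEdgeSet {s(u, v)} := by
      intro a b hab
      rw [sdiff_adj]
      rw [fromEdgeSet_adj] at hab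
      refine ⟨(fromEdgeSet_adj _).mpr ⟨hsub hab.1, hab.2⟩, ?_⟩
      rw [fromEdgeSet_adj]
      rintro ⟨hmem, -⟩
      exact hab.1.2 hmem
    obtain ⟨w0, c, hc, hmemc⟩ :=
      (adj_and_reachable_delete_edges_iff_exists_cycle).mp ⟨hAdj, hr.mono h2⟩
    exact hac c hc
  obtain ⟨w, hwuv, hw2, hw3⟩ : ∃ w : V,
      ((fromEdgeSet s).Adj w u ∨ (fromEdgeSet s).Adj w v) ∧ w ∉ R ∧
        (∀ r1 ∈ insert w R, ∀ r2 ∈ insert w R,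
          (fromEdgeSet s').Reachable r1 r2 → r1 = r2) := by
    by_cases hcase : ∃ r ∈ R, (fromEdgeSet s').Reachable u r
    · obtain ⟨r1, hr1, hur1⟩ := hcase
      refine ⟨v, Or.inl hAdj.symm, ?_, ?_⟩
      · intro hvR
        rcases eq_or_ne v r1 with rfl | hvr1
        · exact hnr hur1
        · exact hvr1 (hR v hvR r1 hr1 ((hAdj.symm.reachable).trans (hur1.mono hle)))
      · intro r1' h1 r2' h2 hreach
        rcases Set.mem_insert_iff.mp h1 with rfl | h1R
        · rcases Set.mem_insert_iff.mp h2 with heq | h2R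
          · exact heq.symm
          · by_contra hvne
            rcases eq_or_ne r2' r1 with rfl | hner1
            · exact hnr (hur1.trans hreach.symm)
            · have hrch : (fromEdgeSet s).Reachable r1 r2' :=
                ((hur1.mono hle).symm.trans (hAdj.reachable)).trans (hreach.mono hle)
              exact hner1 (hR r1 hr1 r2' h2R hrch).symm
        · rcases Set.mem_insert_iff.mp h2 with rfl | h2R
          · by_contra hvne
            rcases eq_or_ne r1' r1 with rfl | hner1
            · exact hnr (hur1.trans hreach)
            · have hrch : (fromEdgeSet s).Reachable r1 r1' :=
                ((hur1.mono hle).symm.trans (hAdj.reachable)).trans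
                  ((hreach.mono hle).symm)
              exact hner1 (hR r1 hr1 r1' h1R hrch).symm
          · exact hR r1' h1R r2' h2R (hreach.mono hle)
    · refine ⟨u, Or.inr hAdj, fun huR => hcase ⟨u, huR, Reachable.refl u⟩, ?_⟩
      intro r1' h1 r2' h2 hreach
      rcases Set.mem_insert_iff.mp h1 with rfl | h1R
      · rcases Set.mem_insert_iff.mp h2 with heq | h2R
        · exact heq.symm
        · exact absurd ⟨r2', h2R, hreach⟩ hcase
      · rcases Set.mem_insert_iff.mp h2 with rfl | h2R
        · exact absurd ⟨r1', h1R, hreach.symm⟩ hcase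
        · exact hR r1' h1R r2' h2R (hreach.mono hle)
  have hdiag' : ∀ e' ∈ s', ¬e'.IsDiag := fun e' he' => hdiag e' (hsub he')
  have hcount : s'.ncard + 1 = n := by
    rw [← hn]
    exact Set.ncard_diff_singleton_add_one he (Set.toFinite s)
  have hIH := IH s'.ncard (by omega) s' (insert w R) rfl hdiag' hac' hw3
  have hwsup : w ∈ (fromEdgeSet s).support := by
    rcases hwuv with h | h
    · exact ⟨u, h⟩
    · exact ⟨v, h⟩
  have hsubset : insert w ((fromEdgeSet s').support \ insert w R) ⊆
      (fromEdgeSet s).support \ R := by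
    rintro x (rfl | ⟨hx1, hx2⟩)
    · exact ⟨hwsup, hw2⟩
    · exact ⟨support_mono hle hx1, fun hxR => hx2 (Set.mem_insert_of_mem _ hxR)⟩
  have h4 : (insert w ((fromEdgeSet s').support \ insert w R)).ncard =
      ((fromEdgeSet s').support \ insert w R).ncard + 1 :=
    Set.ncard_insert_of_notMem (by simp) (Set.toFinite _)
  have h5 := Set.ncard_le_ncard hsubset (Set.toFinite _)
  omega

end LemmaX

section Tops
open SimpleGraph

variable {V : Type} [Fintype V] [DecidableEq V]

lemma walk_head_adj {G : SimpleGraph V} {v w : V} (p : G.Walk v w) (h : v ≠ w) :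
    ∃ x, G.Adj v x := by
  cases p with
  | nil => exact absurd rfl h
  | cons h' _ => exact ⟨_, h'⟩

lemma mem_support_of_reachable {G : SimpleGraph V} {v w : V}
    (h : G.Reachable v w) (hne : v ≠ w) : v ∈ G.support := by
  obtain ⟨p⟩ := h
  exact walk_head_adj p hne

lemma support_of_reachable {G : SimpleGraph V} {v w : V}
    (hv : v ∈ G.support) (h : G.Reachable v w) : w ∈ G.support := by
  rcases eq_or_ne w v with rfl | hne
  · exact hv
  · exact mem_support_of_reachable h.symm hne

lemma topSpec (G : SimpleGraph V) (Fo : RForest V) (v : V) :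
    ∃ t : V, (Anc Fo t v ∧ G.Reachable v t) ∧
      ∀ u, Anc Fo u v → G.Reachable v u → Fo.depthV t ≤ Fo.depthV u := by
  obtain ⟨t, ht, hmin⟩ := Set.exists_min_image {u | Anc Fo u v ∧ G.Reachable v u}
    Fo.depthV (Set.toFinite _) ⟨v, anc_refl v, Reachable.refl v⟩
  exact ⟨t, ht, fun u h1 h2 => hmin u ⟨h1, h2⟩⟩

noncomputable def topOf (G : SimpleGraph V) (Fo : RForest V) (v : V) : V :=
  (topSpec G Fo v).choose

lemma topOf_anc (G : SimpleGraph V) (Fo : RForest V) (v : V) : Anc Fo (topOf G Fo v) v :=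
  (topSpec G Fo v).choose_spec.1.1

lemma topOf_reach (G : SimpleGraph V) (Fo : RForest V) (v : V) :
    G.Reachable v (topOf G Fo v) :=
  (topSpec G Fo v).choose_spec.1.2

lemma topOf_min (G : SimpleGraph V) (Fo : RForest V) {v u : V} (h1 : Anc Fo u v)
    (h2 : G.Reachable v u) : Fo.depthV (topOf G Fo v) ≤ Fo.depthV u :=
  (topSpec G Fo v).choose_spec.2 u h1 h2

lemma anc_topOf_of_reachable {G : SimpleGraph V} {Fo : RForest V}
    (hclo : Fo.ClosureContains G) {v w : V} (h : G.Reachable v w) :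
    Anc Fo (topOf G Fo v) w := by
  rw [reachable_iff_reflTransGen] at h
  induction h with
  | refl => exact topOf_anc G Fo v
  | @tail b c h1 hadj ih =>
    rcases hclo _ _ hadj with hanc | hanc
    · exact anc_trans ih hanc
    · rcases anc_total ih hanc with h2 | h2
      · exact h2
      · have hcv : Anc Fo c v := anc_trans h2 (topOf_anc G Fo v)
        have hreach : G.Reachable v c :=
          ((reachable_iff_reflTransGen v b).mpr h1).trans hadj.reachable
        have hmin := topOf_min G Fo hcv hreach
        rcases eq_or_ne c (topOf G Fo v) with rfl | hne
        · exact anc_refl _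
        · exact absurd (dep_lt_of_anc_ne h2 hne) (by omega)

lemma topOf_eq_of_reachable {G : SimpleGraph V} {Fo : RForest V}
    (hclo : Fo.ClosureContains G) {v w : V} (h : G.Reachable v w) :
    topOf G Fo v = topOf G Fo w := by
  have h1 : Anc Fo (topOf G Fo v) (topOf G Fo w) :=
    anc_topOf_of_reachable hclo (h.trans (topOf_reach G Fo w))
  have h2 : Anc Fo (topOf G Fo w) (topOf G Fo v) :=
    anc_topOf_of_reachable hclo (h.symm.trans (topOf_reach G Fo v))
  exact anc_antisymm h1 h2

lemma topOf_dep_pos {G : SimpleGraph V} {Fo : RForest V} {v : V}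
    (h : topOf G Fo v ≠ v) : 1 ≤ Fo.depthV v := by
  rcases Nat.eq_zero_or_pos (Fo.depthV v) with h0 | h1
  · exact absurd (dep_eq_zero_anc h0 (topOf_anc G Fo v)) h
  · exact h1

end Tops

section LemmaY
open SimpleGraph

variable {V : Type} [Fintype V] [DecidableEq V]

lemma lemmaY (H : SimpleGraph V) (R : Set V)
    (hpair : ∀ r1 ∈ R, ∀ r2 ∈ R, H.Reachable r1 r2 → r1 = r2)
    (hhit : ∀ v ∈ H.support, ∃ r ∈ R, H.Reachable v r) :
    (H.support \ R).ncard ≤ H.edgeSet.ncard := by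
  have key : ∀ v, v ∈ H.support \ R → ∃ x : V, H.Adj v x ∧
      ∀ r ∈ R, H.Reachable v r → H.dist x r + 1 = H.dist v r := by
    rintro v ⟨hvs, hvR⟩
    obtain ⟨r, hrR, hvr⟩ := hhit v hvs
    have hvner : v ≠ r := by rintro rfl; exact hvR hrR
    obtain ⟨p, hp⟩ := hvr.exists_walk_length_eq_dist
    cases p with
    | nil => exact absurd rfl hvner
    | @cons _ x _ h' q =>
      refine ⟨x, h', fun r' hr' hvr' => ?_⟩
      have hrr' : r = r' := hpair r hrR r' hr' (hvr.symm.trans hvr')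
      subst hrr'
      simp only [Walk.length_cons] at hp
      have h1 : H.dist x r ≤ q.length := dist_le q
      have h2 : H.dist v r ≤ H.dist x r + 1 := by
        obtain ⟨q', hq'⟩ := (q.reachable).exists_walk_length_eq_dist
        have h3 := dist_le (Walk.cons h' q')
        simp only [Walk.length_cons, hq'] at h3
        omega
      omega
  classical
  set f : V → Sym2 V := fun v =>
    if h : v ∈ H.support \ R then s(v, (key v h).choose) else s(v, v) with hf
  have hmaps : ∀ v ∈ H.support \ R, f v ∈ H.edgeSet := by
    intro v hv
    rw [hf]; simp only [dif_pos hv]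
    exact (key v hv).choose_spec.1
  have hinj : Set.InjOn f (H.support \ R) := by
    intro v1 h1 v2 h2 heq
    rw [hf] at heq; simp only [dif_pos h1, dif_pos h2] at heq
    rw [Sym2.eq_iff] at heq
    rcases heq with ⟨rfl, -⟩ | ⟨he1, he2⟩
    · rfl
    · exfalso
      obtain ⟨r1, hr1R, hv1r⟩ := hhit v1 h1.1
      have hadj12 : H.Adj v1 v2 := by rw [← he2]; exact (key v1 h1).choose_spec.1
      have hv2r : H.Reachable v2 r1 := (hadj12.symm.reachable).trans hv1r
      have hd1 := (key v1 h1).choose_spec.2 r1 hr1R hv1r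
      have hd2 := (key v2 h2).choose_spec.2 r1 hr1R hv2r
      rw [he2] at hd1
      rw [← he1] at hd2
      omega
  have := Set.ncard_le_ncard_of_injOn f hmaps hinj (Set.toFinite _)
  exact this

end LemmaY

section MaxAcyclic
open SimpleGraph

variable {V : Type} [Fintype V] [DecidableEq V]

lemma graphicRk_exists_max (G : SimpleGraph V) :
    ∃ S : Set G.edgeSet, S.ncard = graphicRk G Set.univ ∧
      (fromEdgeSet (Subtype.val '' S)).IsAcyclic ∧
      ∀ S2 : Set G.edgeSet, (fromEdgeSet (Subtype.val '' S2)).IsAcyclic →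
        S2.ncard ≤ graphicRk G Set.univ := by
  have hbdd : BddAbove {k : ℕ | ∃ S' ⊆ (Set.univ : Set G.edgeSet),
      (fromEdgeSet (Subtype.val '' S')).IsAcyclic ∧ S'.ncard = k} := by
    refine ⟨Nat.card G.edgeSet, ?_⟩
    rintro k ⟨S', -, -, rfl⟩
    rw [← Set.ncard_univ]
    exact Set.ncard_le_ncard (Set.subset_univ _) (Set.toFinite _)
  have hne : (0 : ℕ) ∈ {k : ℕ | ∃ S' ⊆ (Set.univ : Set G.edgeSet),
      (fromEdgeSet (Subtype.val '' S')).IsAcyclic ∧ S'.ncard = k} := by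
    refine ⟨∅, Set.empty_subset _, ?_, by simp⟩
    rw [Set.image_empty, fromEdgeSet_empty]
    exact isAcyclic_bot
  have hmem := Nat.sSup_mem ⟨0, hne⟩ hbdd
  simp only [graphicRk]
  obtain ⟨S, -, hac, hcard⟩ := hmem
  refine ⟨S, hcard, hac, fun S2 hac2 => ?_⟩
  exact le_csSup hbdd ⟨S2, Set.subset_univ _, hac2, rfl⟩

lemma max_reach (G : SimpleGraph V) (S : Set G.edgeSet)
    (hac : (fromEdgeSet (Subtype.val '' S)).IsAcyclic)
    (hmax : ∀ S2 : Set G.edgeSet, (fromEdgeSet (Subtype.val '' S2)).IsAcyclic →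
      S2.ncard ≤ graphicRk G Set.univ)
    (hS : S.ncard = graphicRk G Set.univ)
    {u w : V} (h : G.Adj u w) :
    (fromEdgeSet (Subtype.val '' S)).Reachable u w := by
  by_contra hnr
  set e : G.edgeSet := ⟨s(u, w), h⟩ with he
  have henot : e ∉ S := by
    intro heS
    exact hnr ((fromEdgeSet_adj _).mpr ⟨Set.mem_image_of_mem Subtype.val heS, h.ne⟩).reachable
  have himg : Subtype.val '' (insert e S) = insert (s(u, w)) (Subtype.val '' S) :=
    Set.image_insert_eq
  have hac2 : (fromEdgeSet (Subtype.val '' (insert e S))).IsAcyclic := by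
    rw [himg]
    intro a c hc
    by_cases hmem : s(u, w) ∈ c.edges
    · have h2 := (adj_and_reachable_delete_edges_iff_exists_cycle).mpr ⟨a, c, hc, hmem⟩
      apply hnr
      refine Reachable.mono ?_ h2.2
      intro a' b' hab
      rw [deleteEdges_adj] at hab
      obtain ⟨hab1, hab2⟩ := hab
      rw [fromEdgeSet_adj] at hab1
      rw [fromEdgeSet_adj]
      rcases Set.mem_insert_iff.mp hab1.1 with h3 | h3
      · exact absurd (Set.mem_singleton_iff.mpr h3) hab2
      · exact ⟨h3, hab1.2⟩
    · have hq : ∀ e' ∈ c.edges, e' ∈ (fromEdgeSet (Subtype.val '' S)).edgeSet := by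
        intro e' he'
        have h1 := c.edges_subset_edgeSet he'
        rw [edgeSet_fromEdgeSet] at h1 ⊢
        rcases Set.mem_insert_iff.mp h1.1 with h2 | h2
        · exact absurd (h2 ▸ he') hmem
        · exact ⟨h2, h1.2⟩
      exact hac (c.transfer _ hq) (hc.transfer hq)
  have hcard : (insert e S).ncard = S.ncard + 1 :=
    Set.ncard_insert_of_notMem henot (Set.toFinite _)
  have hle := hmax _ hac2
  omega

lemma max_reach_closure (G : SimpleGraph V) (S : Set G.edgeSet)
    (hac : (fromEdgeSet (Subtype.val '' S)).IsAcyclic)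
    (hmax : ∀ S2 : Set G.edgeSet, (fromEdgeSet (Subtype.val '' S2)).IsAcyclic →
      S2.ncard ≤ graphicRk G Set.univ)
    (hS : S.ncard = graphicRk G Set.univ)
    {u w : V} (hreach : G.Reachable u w) :
    (fromEdgeSet (Subtype.val '' S)).Reachable u w := by
  rw [reachable_iff_reflTransGen] at hreach
  induction hreach with
  | refl => exact Reachable.refl _
  | tail h1 hadj ih => exact ih.trans (max_reach G S hac hmax hS hadj)

end MaxAcyclic

section TreeConstruction
open SimpleGraph

variable {V : Type} [Fintype V] [DecidableEq V]

def NRset (G : SimpleGraph V) (Fo : RForest V) : Set V :=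
  {v | v ∈ G.support ∧ topOf G Fo v ≠ v}

def BsetOf (G : SimpleGraph V) (Fo : RForest V) (v : V) : Set V :=
  {u | u ∈ NRset G Fo ∧ Anc Fo u v ∧ u ≠ v ∧ G.Reachable v u}

open scoped Classical in
noncomputable def bmax (G : SimpleGraph V) (Fo : RForest V) (v : V) : Option V :=
  if h : (BsetOf G Fo v).Nonempty then
    some (Set.exists_max_image (BsetOf G Fo v) Fo.depthV (Set.toFinite _) h).choose
  else none

lemma bmax_some {G : SimpleGraph V} {Fo : RForest V} {v u : V} (h : bmax G Fo v = some u) :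
    u ∈ BsetOf G Fo v ∧ ∀ a ∈ BsetOf G Fo v, Fo.depthV a ≤ Fo.depthV u := by
  classical
  unfold bmax at h
  split_ifs at h with hne
  injection h with h2
  subst h2
  exact (Set.exists_max_image (BsetOf G Fo v) Fo.depthV (Set.toFinite _) hne).choose_spec

lemma bmax_eq_none {G : SimpleGraph V} {Fo : RForest V} {v : V} (h : bmax G Fo v = none) :
    BsetOf G Fo v = ∅ := by
  classical
  unfold bmax at h
  split_ifs at h with hne
  exact Set.not_nonempty_iff_eq_empty.mp hne

open scoped Classical in
noncomputable def tparent (G : SimpleGraph V) (Fo : RForest V) {r : ℕ}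
    (e : ↥(NRset G Fo) ≃ Fin r) : Fin (r + 1) → Fin (r + 1) := fun x =>
  Fin.cases 0 (fun i => (bmax G Fo (e.symm i : V)).elim 0
    (fun u => if hu : u ∈ NRset G Fo then Fin.succ (e ⟨u, hu⟩) else 0)) x

lemma tparent_zero (G : SimpleGraph V) (Fo : RForest V) {r : ℕ}
    (e : ↥(NRset G Fo) ≃ Fin r) : tparent G Fo e 0 = 0 := by
  simp [tparent]

open scoped Classical in
lemma tparent_succ (G : SimpleGraph V) (Fo : RForest V) {r : ℕ}
    (e : ↥(NRset G Fo) ≃ Fin r) (i : Fin r) :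
    tparent G Fo e i.succ = (bmax G Fo (e.symm i : V)).elim 0
      (fun u => if hu : u ∈ NRset G Fo then Fin.succ (e ⟨u, hu⟩) else 0) := by
  simp [tparent]

noncomputable def tmeasure (G : SimpleGraph V) (Fo : RForest V) {r : ℕ}
    (e : ↥(NRset G Fo) ≃ Fin r) : Fin (r + 1) → ℕ := fun x =>
  Fin.cases 0 (fun i => Fo.depthV (e.symm i : V) + 1) x

lemma tparent_measure_lt (G : SimpleGraph V) (Fo : RForest V) {r : ℕ}
    (e : ↥(NRset G Fo) ≃ Fin r) {x : Fin (r + 1)} (hx : x ≠ 0) :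
    tmeasure G Fo e (tparent G Fo e x) < tmeasure G Fo e x := by
  induction x using Fin.cases with
  | zero => exact absurd rfl hx
  | succ i =>
    rw [tparent_succ]
    rcases hb : bmax G Fo (e.symm i : V) with _ | u
    · simp [tmeasure]
    · obtain ⟨⟨huNR, hanc, hne, hreach⟩, hmaxu⟩ := bmax_some hb
      rw [Option.elim_some, dif_pos huNR]
      simp only [tmeasure, Fin.cases_succ, Equiv.symm_apply_apply]
      have := dep_lt_of_anc_ne hanc hne
      omega

noncomputable def theTree (G : SimpleGraph V) (Fo : RForest V) {r : ℕ}
    (e : ↥(NRset G Fo) ≃ Fin r) : RTree (Fin (r + 1)) where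
  root := 0
  parent := tparent G Fo e
  parent_root := tparent_zero G Fo e
  reach := by
    intro v
    suffices h : ∀ (n : ℕ) (v : Fin (r + 1)), tmeasure G Fo e v ≤ n →
        ∃ k, (tparent G Fo e)^[k] v = 0 by
      exact h _ v le_rfl
    intro n
    induction n with
    | zero =>
      intro v hv
      rcases eq_or_ne v 0 with rfl | hne
      · exact ⟨0, rfl⟩
      · induction v using Fin.cases with
        | zero => exact absurd rfl hne
        | succ i => simp [tmeasure] at hv
    | succ n ih =>
      intro v hv
      rcases eq_or_ne v 0 with rfl | hne
      · exact ⟨0, rfl⟩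
      · have hlt := tparent_measure_lt G Fo e hne
        obtain ⟨k, hk⟩ := ih (tparent G Fo e v) (by omega)
        exact ⟨k + 1, by rw [Function.iterate_succ_apply, hk]⟩

lemma theTree_root (G : SimpleGraph V) (Fo : RForest V) {r : ℕ}
    (e : ↥(NRset G Fo) ≃ Fin r) : (theTree G Fo e).root = 0 := rfl

lemma theTree_parent (G : SimpleGraph V) (Fo : RForest V) {r : ℕ}
    (e : ↥(NRset G Fo) ≃ Fin r) : (theTree G Fo e).parent = tparent G Fo e := rfl

lemma theTree_depthV_le (G : SimpleGraph V) (Fo : RForest V) {r : ℕ}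
    (e : ↥(NRset G Fo) ≃ Fin r) :
    ∀ (n : ℕ) (i : Fin r), Fo.depthV (e.symm i : V) ≤ n →
      (theTree G Fo e).depthV i.succ ≤ Fo.depthV (e.symm i : V) := by
  have hdep1 : ∀ i : Fin r, 1 ≤ Fo.depthV (e.symm i : V) :=
    fun i => topOf_dep_pos (e.symm i).2.2
  have hstep : ∀ i : Fin r,
      (theTree G Fo e).depthV i.succ = (theTree G Fo e).depthV (tparent G Fo e i.succ) + 1 := by
    intro i
    rw [← theTree_parent]
    exact tdep_parent (Fin.succ_ne_zero i)
  intro n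
  induction n with
  | zero =>
    intro i hi
    exact absurd (hdep1 i) (by omega)
  | succ n ih =>
    intro i hi
    rw [hstep i, tparent_succ]
    rcases hb : bmax G Fo (e.symm i : V) with _ | u
    · rw [Option.elim_none]
      have h0 : (theTree G Fo e).depthV 0 = 0 := tdep_root
      rw [h0]
      exact hdep1 i
    · obtain ⟨⟨huNR, hanc, hne, hreach⟩, hmaxu⟩ := bmax_some hb
      rw [Option.elim_some, dif_pos huNR]
      have hlt : Fo.depthV u < Fo.depthV (e.symm i : V) := dep_lt_of_anc_ne hanc hne
      have hsymm : ((e.symm (e ⟨u, huNR⟩)) : V) = u := by rw [Equiv.symm_apply_apply]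
      have hih := ih (e ⟨u, huNR⟩) (by rw [hsymm]; omega)
      rw [hsymm] at hih
      omega

lemma theTree_path (G : SimpleGraph V) (Fo : RForest V) {r : ℕ}
    (e : ↥(NRset G Fo) ≃ Fin r) :
    ∀ (n : ℕ) (z w : V) (hz : z ∈ NRset G Fo) (hw : w ∈ NRset G Fo),
      Fo.depthV z ≤ n → Anc Fo w z → G.Reachable z w →
      AncT (theTree G Fo e) (Fin.succ (e ⟨w, hw⟩)) (Fin.succ (e ⟨z, hz⟩)) := by
  intro n
  induction n with
  | zero =>
    intro z w hz hw hdep hanc hreach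
    rcases eq_or_ne w z with rfl | hne
    · exact ancT_refl _
    · exact absurd (topOf_dep_pos hz.2) (by omega)
  | succ n ih =>
    intro z w hz hw hdep hanc hreach
    rcases eq_or_ne w z with rfl | hne
    · exact ancT_refl _
    · have hwB : w ∈ BsetOf G Fo z := ⟨hw, hanc, hne, hreach⟩
      rcases hb : bmax G Fo z with _ | u
      · rw [bmax_eq_none hb] at hwB
        exact absurd hwB (Set.notMem_empty _)
      · obtain ⟨⟨huNR, hanc_u, hne_u, hreach_u⟩, hmax_u⟩ := bmax_some hb
        have hdepu : Fo.depthV u < Fo.depthV z := dep_lt_of_anc_ne hanc_u hne_u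
        have hancwu : Anc Fo w u := anc_of_dep_le hanc hanc_u (hmax_u w hwB)
        have hreach_uw : G.Reachable u w := hreach_u.symm.trans hreach
        have ihres := ih u w huNR hw (by omega) hancwu hreach_uw
        have hpar : (theTree G Fo e).parent (Fin.succ (e ⟨z, hz⟩)) =
            Fin.succ (e ⟨u, huNR⟩) := by
          rw [theTree_parent, tparent_succ]
          have hsymm : ((e.symm (e ⟨z, hz⟩)) : V) = z := by rw [Equiv.symm_apply_apply]
          rw [hsymm, hb, Option.elim_some, dif_pos huNR]
        obtain ⟨m, hm⟩ := ihres
        exact ⟨m + 1, by rw [Function.iterate_succ_apply, hpar, hm]⟩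

end TreeConstruction

section PathForest
variable {V : Type} [Fintype V] [DecidableEq V]

noncomputable def pparent (V : Type) [Fintype V] [DecidableEq V] : V → V := fun v =>
  (Fintype.equivFin V).symm
    ⟨((Fintype.equivFin V) v).val - 1,
      lt_of_le_of_lt (Nat.sub_le _ _) ((Fintype.equivFin V) v).isLt⟩

lemma pparent_val (v : V) :
    ((Fintype.equivFin V) (pparent V v)).val = ((Fintype.equivFin V) v).val - 1 := by
  simp [pparent]

lemma pparent_fix {v : V} (h : ((Fintype.equivFin V) v).val = 0) : pparent V v = v := by
  have h2 : (⟨((Fintype.equivFin V) v).val - 1,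
      lt_of_le_of_lt (Nat.sub_le _ _) ((Fintype.equivFin V) v).isLt⟩ : Fin (Fintype.card V)) =
      (Fintype.equivFin V) v := by
    apply Fin.ext
    show ((Fintype.equivFin V) v).val - 1 = ((Fintype.equivFin V) v).val
    omega
  rw [pparent, h2, Equiv.symm_apply_apply]

noncomputable def pathForest (V : Type) [Fintype V] [DecidableEq V] : RForest V where
  parent := pparent V
  reach := by
    intro v
    suffices h : ∀ (n : ℕ) (v : V), ((Fintype.equivFin V) v).val ≤ n →
        ∃ k, pparent V ((pparent V)^[k] v) = (pparent V)^[k] v by exact h _ v le_rfl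
    intro n
    induction n with
    | zero =>
      intro v hv
      exact ⟨0, by simp only [Function.iterate_zero, id_eq]; exact pparent_fix (by omega)⟩
    | succ n ih =>
      intro v hv
      rcases Nat.eq_zero_or_pos ((Fintype.equivFin V) v).val with h0 | h1
      · exact ⟨0, by simp only [Function.iterate_zero, id_eq]; exact pparent_fix h0⟩
      · obtain ⟨k, hk⟩ := ih (pparent V v) (by rw [pparent_val]; omega)
        exact ⟨k + 1, by rw [Function.iterate_succ_apply]; exact hk⟩

lemma pathForest_anc {u v : V}
    (h : ((Fintype.equivFin V) u).val ≤ ((Fintype.equivFin V) v).val) :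
    ∃ n, (pparent V)^[n] v = u := by
  suffices hs : ∀ (d : ℕ) (v : V),
      ((Fintype.equivFin V) v).val - ((Fintype.equivFin V) u).val = d →
      ((Fintype.equivFin V) u).val ≤ ((Fintype.equivFin V) v).val →
      ∃ n, (pparent V)^[n] v = u by exact hs _ v rfl h
  intro d
  induction d with
  | zero =>
    intro v hd hle
    have : (Fintype.equivFin V) u = (Fintype.equivFin V) v := Fin.ext (by omega)
    exact ⟨0, ((Fintype.equivFin V).injective this).symm⟩
  | succ d ih =>
    intro v hd hle
    have h1 : ((Fintype.equivFin V) (pparent V v)).val = ((Fintype.equivFin V) v).val - 1 :=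
      pparent_val v
    obtain ⟨n, hn⟩ := ih (pparent V v) (by omega) (by omega)
    exact ⟨n + 1, by rw [Function.iterate_succ_apply]; exact hn⟩

lemma pathForest_closure (G : SimpleGraph V) : (pathForest V).ClosureContains G := by
  intro u v hadj
  rcases le_total ((Fintype.equivFin V) u).val ((Fintype.equivFin V) v).val with h | h
  · exact Or.inl (pathForest_anc h)
  · exact Or.inr (pathForest_anc h)

end PathForest

/-- Proposition: `bd(M(G)) ≤ td(G) - 1`. For any graph `G`, the
branch-depth of the graphic matroid `M(G)` is at most the tree-depth of `G` decreased
by one. -/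
theorem graphic_branchDepth_le_treeDepth_sub_one (V : Type) [Fintype V] [DecidableEq V]
    (G : SimpleGraph V) :
    graphicBranchDepth G ≤ treeDepth G - 1 := by
  classical
  -- a minimizing tree-depth forest
  have htdne : {h : ℕ | ∃ Fo : RForest V, Fo.ClosureContains G ∧ Fo.height = h}.Nonempty :=
    ⟨(pathForest V).height, pathForest V, pathForest_closure G, rfl⟩
  obtain ⟨Fo, hclo, hht⟩ : ∃ Fo : RForest V, Fo.ClosureContains G ∧ Fo.height = treeDepth G :=
    Nat.sInf_mem htdne
  -- a maximum acyclic set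
  obtain ⟨S, hScard, hSac, hSmax⟩ := graphicRk_exists_max G
  set r := graphicRk G Set.univ with hr
  have hfromle : ∀ S2 : Set G.edgeSet, SimpleGraph.fromEdgeSet (Subtype.val '' S2) ≤ G := by
    intro S2 a b hab
    rw [SimpleGraph.fromEdgeSet_adj] at hab
    obtain ⟨⟨x, hxS, hxval⟩, hne⟩ := hab
    exact (G.mem_edgeSet).mp (hxval ▸ x.2)
  set HS := SimpleGraph.fromEdgeSet (Subtype.val '' S) with hHS
  have hHSle : HS ≤ G := hfromle S
  set Tops := {t : V | t ∈ G.support ∧ topOf G Fo t = t} with hTops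
  have hTopsPair : ∀ r1 ∈ Tops, ∀ r2 ∈ Tops, G.Reachable r1 r2 → r1 = r2 := by
    rintro t1 ⟨-, h1⟩ t2 ⟨-, h2⟩ hre
    rw [← h1, ← h2]
    exact topOf_eq_of_reachable hclo hre
  have hNReq : NRset G Fo = HS.support \ Tops := by
    ext v
    constructor
    · rintro ⟨hvsup, hvtop⟩
      obtain ⟨w, hw⟩ := hvsup
      have hreach : HS.Reachable v w := max_reach G S hSac hSmax hScard hw
      refine ⟨mem_support_of_reachable hreach hw.ne, ?_⟩
      rintro ⟨-, htop⟩
      exact hvtop htop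
    · rintro ⟨hvsup, hvtop⟩
      have hGsup : v ∈ G.support := SimpleGraph.support_mono hHSle hvsup
      exact ⟨hGsup, fun htop => hvtop ⟨hGsup, htop⟩⟩
  have himgcard : (Subtype.val '' S).ncard = r := by
    rw [Set.ncard_image_of_injective _ Subtype.val_injective, hScard]
  have hdiagS : ∀ e' ∈ Subtype.val '' S, ¬e'.IsDiag := by
    rintro e' ⟨x, -, rfl⟩
    exact G.not_isDiag_of_mem_edgeSet x.2
  have hub : r ≤ (NRset G Fo).ncard := by
    rw [hNReq, ← himgcard]
    exact lemmaX (Subtype.val '' S).ncard (Subtype.val '' S) Tops rfl hdiagS hSac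
      (fun r1 h1 r2 h2 hre => hTopsPair r1 h1 r2 h2 (hre.mono hHSle))
  have hlb : (NRset G Fo).ncard ≤ r := by
    rw [hNReq]
    have hedge : HS.edgeSet.ncard = r := by
      rw [hHS, SimpleGraph.edgeSet_fromEdgeSet]
      have hdiff : Subtype.val '' S \ Sym2.diagSet = Subtype.val '' S := by
        ext e'
        constructor
        · rintro ⟨h1, -⟩
          exact h1
        · intro h1
          exact ⟨h1, hdiagS e' h1⟩
      rw [hdiff, himgcard]
    have hY := lemmaY HS Tops
      (fun r1 h1 r2 h2 hre => hTopsPair r1 h1 r2 h2 (hre.mono hHSle))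
      (fun v hv => by
        have hGsup : v ∈ G.support := SimpleGraph.support_mono hHSle hv
        refine ⟨topOf G Fo v, ⟨support_of_reachable hGsup (topOf_reach G Fo v),
          (topOf_eq_of_reachable hclo (topOf_reach G Fo v)).symm⟩, ?_⟩
        exact max_reach_closure G S hSac hSmax hScard (topOf_reach G Fo v))
    omega
  have hcount : (NRset G Fo).ncard = r := le_antisymm hlb hub
  haveI : Fintype ↥(NRset G Fo) := Fintype.ofFinite _
  have hcard2 : Fintype.card ↥(NRset G Fo) = r := by
    rw [← Nat.card_eq_fintype_card, Nat.card_coe_set_eq, hcount]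
  set e := Fintype.equivFinOfCardEq hcard2 with he
  set T := theTree G Fo e with hT
  -- oriented endpoints of each edge
  have hpair : ∀ x : G.edgeSet, ∃ p : V × V, G.Adj p.1 p.2 ∧ (x : Sym2 V) = s(p.1, p.2) ∧
      Anc Fo p.1 p.2 := by
    rintro ⟨ex, hex⟩
    induction ex using Sym2.ind with
    | _ a b =>
      have hadj : G.Adj a b := (G.mem_edgeSet).mp hex
      rcases hclo a b hadj with h | h
      · exact ⟨(a, b), hadj, rfl, h⟩
      · exact ⟨(b, a), hadj.symm, Sym2.eq_swap, h⟩
  choose pfun hadjp hvalp hancp using hpair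
  have hdNR : ∀ x : G.edgeSet, (pfun x).2 ∈ NRset G Fo := by
    intro x
    have hnex : (pfun x).1 ≠ (pfun x).2 := (hadjp x).ne
    refine ⟨⟨_, (hadjp x).symm⟩, ?_⟩
    have hlt : Fo.depthV (pfun x).1 < Fo.depthV (pfun x).2 := dep_lt_of_anc_ne (hancp x) hnex
    have hmin := topOf_min G Fo (hancp x) (hadjp x).symm.reachable
    intro htop
    rw [htop] at hmin
    omega
  have hleaf : ∀ x : G.edgeSet, ∃ l, T.IsLeaf l ∧
      AncT T (Fin.succ (e ⟨(pfun x).2, hdNR x⟩)) l := fun x => exists_leaf_below _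
  choose ffun hfleaf hfanc using hleaf
  -- the three conditions of a depth-decomposition
  have hedgecount : T.edgeCount = r := by
    simp [RTree.edgeCount]
  have hrank : ∀ X' : Set G.edgeSet,
      graphicRk G X' ≤ (⋃ x ∈ X', T.pathEdges (ffun x)).ncard := by
    intro X'
    simp only [graphicRk]
    refine csSup_le' ?_
    rintro k ⟨S', hS'sub, hS'ac, rfl⟩
    have hdiagS' : ∀ e' ∈ Subtype.val '' S', ¬e'.IsDiag := by
      rintro e' ⟨x, -, rfl⟩
      exact G.not_isDiag_of_mem_edgeSet x.2
    have hS'le : SimpleGraph.fromEdgeSet (Subtype.val '' S') ≤ G := hfromle S'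
    have hstep1 : (Subtype.val '' S').ncard ≤
        ((SimpleGraph.fromEdgeSet (Subtype.val '' S')).support \ Tops).ncard :=
      lemmaX (Subtype.val '' S').ncard (Subtype.val '' S') Tops rfl hdiagS' hS'ac
        (fun r1 h1 r2 h2 hre => hTopsPair r1 h1 r2 h2 (hre.mono hS'le))
    set W := (SimpleGraph.fromEdgeSet (Subtype.val '' S')).support \ Tops with hW
    have hWNR : W ⊆ NRset G Fo := by
      rintro w ⟨hws, hwT⟩
      have hGsup : w ∈ G.support := SimpleGraph.support_mono hS'le hws
      exact ⟨hGsup, fun htop => hwT ⟨hGsup, htop⟩⟩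
    set g : V → Fin (r + 1) := fun w =>
      if h : w ∈ NRset G Fo then Fin.succ (e ⟨w, h⟩) else 0 with hg
    have hmapsto : ∀ w ∈ W, g w ∈ ⋃ x ∈ X', T.pathEdges (ffun x) := by
      intro w hw
      have hwNR := hWNR hw
      obtain ⟨z, hz⟩ := hw.1
      change (SimpleGraph.fromEdgeSet (Subtype.val '' S')).Adj w z at hz
      rw [SimpleGraph.fromEdgeSet_adj] at hz
      obtain ⟨⟨x, hxS', hxval⟩, hwz⟩ := hz
      have hx2 : s((pfun x).1, (pfun x).2) = s(w, z) := (hvalp x).symm.trans hxval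
      have hAncT : AncT T (Fin.succ (e ⟨w, hwNR⟩)) (Fin.succ (e ⟨(pfun x).2, hdNR x⟩)) := by
        rcases Sym2.eq_iff.mp hx2 with ⟨h1, h2⟩ | ⟨h1, h2⟩
        · -- (pfun x).1 = w, (pfun x).2 = z
          exact theTree_path G Fo e (Fo.depthV (pfun x).2) (pfun x).2 w (hdNR x) hwNR le_rfl
            (h1 ▸ hancp x) (h1 ▸ (hadjp x).symm.reachable)
        · -- (pfun x).1 = z, (pfun x).2 = w
          have hsub : (⟨w, hwNR⟩ : ↥(NRset G Fo)) = ⟨(pfun x).2, hdNR x⟩ :=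
            Subtype.ext h2.symm
          rw [hsub]
          exact ancT_refl _
      have hmem : g w ∈ T.pathEdges (ffun x) := by
        rw [hg]
        simp only [dif_pos hwNR]
        refine mem_pathEdges (ancT_trans hAncT (hfanc x)) ?_
        show Fin.succ (e ⟨w, hwNR⟩) ≠ (0 : Fin (r + 1))
        exact Fin.succ_ne_zero _
      exact Set.mem_biUnion (hS'sub hxS') hmem
    have hinjOn : Set.InjOn g W := by
      intro a ha b hb hab
      rw [hg] at hab
      simp only [dif_pos (hWNR ha), dif_pos (hWNR hb)] at hab
      have h1 := Fin.succ_injective _ hab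
      have h2 := e.injective h1
      exact congrArg Subtype.val h2
    calc S'.ncard = (Subtype.val '' S').ncard :=
          (Set.ncard_image_of_injective _ Subtype.val_injective).symm
      _ ≤ W.ncard := hstep1
      _ ≤ (⋃ x ∈ X', T.pathEdges (ffun x)).ncard :=
          Set.ncard_le_ncard_of_injOn g hmapsto hinjOn (Set.toFinite _)
  have hdecomp : IsDepthDecompOn (graphicRk G) (graphicRk G Set.univ) T ffun :=
    ⟨hfleaf, by rw [hedgecount, hr], hrank⟩
  have hdepth : T.depth ≤ treeDepth G - 1 := by
    apply Finset.sup_le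
    intro x _
    induction x using Fin.cases with
    | zero =>
      have h0 : T.depthV 0 = 0 := tdep_root
      rw [h0]
      exact Nat.zero_le _
    | succ i =>
      have h1 := theTree_depthV_le G Fo e (Fo.depthV (e.symm i : V)) i le_rfl
      have h2 : Fo.depthV (e.symm i : V) + 1 ≤ Fo.height :=
        Finset.le_sup (f := fun v => Fo.depthV v + 1) (Finset.mem_univ ((e.symm i : V)))
      rw [hht] at h2
      rw [← hT] at h1
      omega
  have hmem : T.depth ∈ {d : ℕ | ∃ (nV : ℕ) (T' : RTree (Fin (nV + 1)))
      (f : G.edgeSet → Fin (nV + 1)),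
      IsDepthDecompOn (graphicRk G) (graphicRk G Set.univ) T' f ∧ T'.depth = d} :=
    ⟨r, T, ffun, hdecomp, rfl⟩
  calc graphicBranchDepth G ≤ T.depth := Nat.sInf_le hmem
    _ ≤ treeDepth G - 1 := hdepth
end

section
/- Let A be an m×n matrix of rank m over a field, let M be the vector matroid formed by the columns of A, and let (T, f, g) be an extended depth-decomposition of M with Im(g) = {w_1, ..., w_m}. Let A' be the (unique) m×n matrix satisfying that the j-th column x_j of A equals Σ_{i=1}^m A'_{ij} w_i for every j. Then for every column index j and every row index i with A'_{ij} ≠ 0, the vector w_i equals g(v) for some non-root vertex v on the path in T from f(x_j) to the root; in particular, every column of A' has at most depth(T) nonzero entries. -/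
/-- support of the columns after a change of basis along an extended
depth-decomposition. Let `A` be an `m × n` matrix of rank `m` over a field, let `M` be
the vector matroid formed by the columns of `A`, let `(T, f, g)` be an extended
depth-decomposition of `M` with `Im(g) = {w 0, …, w (m-1)}`, and let `A'` be the matrix
expressing each column of `A` in the basis `w`.  Then for every column index `j` and
row index `i` with `A' i j ≠ 0`, the vector `w i` equals `g u` for some non-root vertex
`u` on the path in `T` from `f j` to the root; in particular every column of `A'` has
at most `depth T` non-zero entries. -/
theorem support_of_column_in_basis (F : Type) [Field F] (m n : ℕ)
    (A : Matrix (Fin m) (Fin n) F) (hA : A.rank = m)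
    {V : Type} [Fintype V] [DecidableEq V]
    (T : RTree V) (f : Fin n → V) (g : V → (Fin m → F))
    (hext : IsExtDepthDecomp F (fun j => A.transpose j) T f g)
    (w : Fin m → (Fin m → F)) (hw : g '' {u : V | u ≠ T.root} = Set.range w)
    (A' : Matrix (Fin m) (Fin n) F)
    (hA' : ∀ j : Fin n, (fun i => A i j) = ∑ i : Fin m, A' i j • w i) :
    (∀ j : Fin n, ∀ i : Fin m, A' i j ≠ 0 →
      ∃ u ∈ T.pathEdges (f j), g u = w i) ∧
    ∀ j : Fin n, {i : Fin m | A' i j ≠ 0}.ncard ≤ T.depth := by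
  obtain ⟨-, -, hspan, hmem⟩ := hext
  -- The columns of `A` span the whole space since `A` has rank `m`.
  have hvspan : Submodule.span F (Set.range fun j => A.transpose j) = ⊤ := by
    apply Submodule.eq_top_of_finrank_eq
    have h := Matrix.rank_eq_finrank_span_cols A
    rw [hA] at h
    have : (Set.range fun j => A.transpose j) = Set.range A.col := rfl
    rw [this, ← h]
    simp
  -- hence `w` spans the whole space
  have hwspan : Submodule.span F (Set.range w) = ⊤ := by
    rw [← hw, hspan, hvspan]
  -- `w` is linearly independent, hence a basis
  have hli : LinearIndependent F w :=
    linearIndependent_of_top_le_span_of_card_eq_finrank hwspan.ge (by simp)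
  let b : Module.Basis (Fin m) F (Fin m → F) := Module.Basis.mk hli hwspan.ge
  have hb : ⇑b = w := Module.Basis.coe_mk hli hwspan.ge
  -- the key claim: all nonzero entries of column `j` of `A'` come from the path
  have key : ∀ j : Fin n, ∀ i : Fin m, A' i j ≠ 0 → w i ∈ g '' T.pathEdges (f j) := by
    intro j i hi
    set P := T.pathEdges (f j) with hP
    set S := {i : Fin m | w i ∈ g '' P} with hS
    have hPsub : g '' P ⊆ Set.range w := by
      rw [← hw]
      apply Set.image_mono
      intro u hu
      exact hu.1
    have hgw : g '' P ⊆ w '' S := by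
      intro y hy
      obtain ⟨i', rfl⟩ := hPsub hy
      exact ⟨i', hy, rfl⟩
    have hv : (fun i => A i j) ∈ Submodule.span F (w '' S) := by
      have h1 : (fun i => A i j) ∈ Submodule.span F (g '' P) := hmem j
      exact Submodule.span_mono hgw h1
    have hrepr : ⇑(b.repr (fun i => A i j)) = fun i => A' i j := by
      have : (fun i => A i j) = ∑ i : Fin m, A' i j • b i := by
        rw [hA' j]
        simp [hb]
      rw [this, Module.Basis.repr_sum_self]
    have hmemspan : (fun i => A i j) ∈ Submodule.span F (⇑b '' S) := by
      rwa [hb]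
    have hsupp := (Module.Basis.mem_span_image b).mp hmemspan
    have : i ∈ (b.repr (fun i => A i j)).support := by
      rw [Finsupp.mem_support_iff]
      intro h0
      apply hi
      have := congrFun hrepr i
      rw [h0] at this
      exact this.symm
    exact hsupp this
  constructor
  · intro j i hi
    obtain ⟨u, hu, hgu⟩ := key j i hi
    exact ⟨u, hu, hgu⟩
  · intro j
    set P := T.pathEdges (f j) with hPdef
    set S := {i : Fin m | w i ∈ g '' P} with hSdef
    have hsub : {i : Fin m | A' i j ≠ 0} ⊆ S := fun i hi => key j i hi
    have h1 : {i : Fin m | A' i j ≠ 0}.ncard ≤ S.ncard :=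
      Set.ncard_le_ncard hsub (Set.toFinite _)
    have h2 : S.ncard = (w '' S).ncard :=
      (Set.ncard_image_of_injOn (hli.injective.injOn)).symm
    have h3 : w '' S ⊆ g '' P := by
      rintro y ⟨i, hi, rfl⟩
      exact hi
    have h4 : (w '' S).ncard ≤ (g '' P).ncard :=
      Set.ncard_le_ncard h3 (Set.toFinite _)
    have h5 : (g '' P).ncard ≤ P.ncard := Set.ncard_image_le (Set.toFinite _)
    -- the path has at most `depthV (f j)` non-root vertices
    set d := T.depthV (f j) with hd_def
    have hd : T.parent^[d] (f j) = T.root := by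
      have hne : {k : ℕ | T.parent^[k] (f j) = T.root}.Nonempty := T.reach (f j)
      exact Nat.sInf_mem hne
    have hP6 : P ⊆ (fun k => T.parent^[k] (f j)) '' Set.Iio d := by
      rintro u ⟨hne, k, rfl⟩
      refine ⟨k, ?_, rfl⟩
      by_contra hk
      rw [Set.mem_Iio, not_lt] at hk
      apply hne
      have : T.parent^[k] (f j) = T.parent^[k - d] (T.parent^[d] (f j)) := by
        rw [← Function.iterate_add_apply]
        congr 1
        omega
      rw [this, hd, Function.iterate_fixed T.parent_root]
    have h6 : P.ncard ≤ d := by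
      calc P.ncard ≤ ((fun k => T.parent^[k] (f j)) '' Set.Iio d).ncard :=
            Set.ncard_le_ncard hP6 ((Set.finite_Iio d).image _)
        _ ≤ (Set.Iio d).ncard := Set.ncard_image_le (Set.finite_Iio d)
        _ = d := by
            have : (Set.Iio d) = ↑(Finset.Iio d) := by simp
            rw [this, Set.ncard_coe_finset]
            simp
    have h7 : d ≤ T.depth := by
      rw [hd_def]
      exact Finset.le_sup (f := T.depthV) (Finset.mem_univ (f j))
    exact h1.trans (h2.le.trans (h4.trans (h5.trans (h6.trans h7))))
end
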